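/- arXiv:1703.09113 — 3 statements merged into one kernel-verified Lean document; each statement's English description precedes it below -/
import Mathlib

section
/- Let 𝔴 = i_1⋯i_k be a nonempty acyclic word and p ∈ {1,2,3}. If p occurs among the letters of 𝔴 and t is the largest index with i_t = p, then β_p(𝔴) = s_{i_1}⋯s_{i_{t-1}}(α_p). If p does not occur in 𝔴, then β_p(𝔴) = -α_p. (In particular, if 𝔴 = 𝔲jk then β_k(𝔴) = s_𝔲 s_j(α_k).) -/
open MvPolynomial

noncomputable section

abbrev Vec3 := Fin 3 → ℤ

/-- The symmetric Cartan matrix entries determined by `c12, c13, c23`. -/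
def cart (c12 c13 c23 : ℤ) (p q : Fin 3) : ℤ :=
  if p = q then 2
  else if (p = 0 ∧ q = 1) ∨ (p = 1 ∧ q = 0) then -c12
  else if (p = 0 ∧ q = 2) ∨ (p = 2 ∧ q = 0) then -c13
  else -c23

/-- Off-diagonal positive entries `c_pq`. -/
def cOf (c12 c13 c23 : ℤ) (p q : Fin 3) : ℤ :=
  if (p = 0 ∧ q = 1) ∨ (p = 1 ∧ q = 0) then c12
  else if (p = 0 ∧ q = 2) ∨ (p = 2 ∧ q = 0) then c13
  else c23

/-- standard basis vectors α_p of ℤ^3 -/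
def alpha (p : Fin 3) : Vec3 := Pi.single p 1

/-- the symmetric bilinear form with (α_p, α_q) given by the Cartan matrix -/
def bform (c12 c13 c23 : ℤ) (v w : Vec3) : ℤ :=
  ∑ p, ∑ q, v p * cart c12 c13 c23 p q * w q

/-- simple reflection s_p -/
def srefl (c12 c13 c23 : ℤ) (p : Fin 3) (v : Vec3) : Vec3 :=
  v - (bform c12 c13 c23 v (alpha p)) • alpha p

/-- s_𝔴 for a word 𝔴 = i₁⋯i_k : the composite s_{i₁}∘⋯∘s_{i_k} -/
def sWord (c12 c13 c23 : ℤ) (w : List (Fin 3)) (v : Vec3) : Vec3 :=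
  w.foldr (fun p u => srefl c12 c13 c23 p u) v

open Fin.NatCast in
/-- a word is acyclic if it is a prefix of 123123⋯ (letters 0,1,2 here) or of 321321⋯ -/
def Acyclic (w : List (Fin 3)) : Prop :=
  (∀ t < w.length, w.getD t 0 = (t : Fin 3)) ∨
  (∀ t < w.length, w.getD t 0 = -((t : Fin 3) + 1))

/-- the length of the longest acyclic prefix -/
def rho (w : List (Fin 3)) : ℕ :=
  @Nat.findGreatest (fun p => Acyclic (w.take p)) (Classical.decPred _) w.length

/-- initial exchange matrix -/
def B0 (c12 c13 c23 : ℤ) : Matrix (Fin 3) (Fin 3) ℤ :=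
  !![0, c12, c13; -c12, 0, c23; -c13, -c23, 0]

/-- matrix mutation μ_k -/
def mutMat (k : Fin 3) (b : Matrix (Fin 3) (Fin 3) ℤ) : Matrix (Fin 3) (Fin 3) ℤ :=
  Matrix.of fun p q =>
    if p = k ∨ q = k then - b p q
    else b p q + (b p k).sign * max (b p k * b k q) 0

/-- mutated exchange matrix B(𝔴) -/
def BW (c12 c13 c23 : ℤ) (w : List (Fin 3)) : Matrix (Fin 3) (Fin 3) ℤ :=
  w.foldl (fun m k => mutMat k m) (B0 c12 c13 c23)

/-- c_pq(𝔴) = |b_pq(𝔴)| -/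
def cW (c12 c13 c23 : ℤ) (w : List (Fin 3)) (p q : Fin 3) : ℤ :=
  |BW c12 c13 c23 w p q|

/-- the ambient field F, the fraction field of ℚ[x₁,x₂,x₃] -/
abbrev FF := FractionRing (MvPolynomial (Fin 3) ℚ)

/-- the initial cluster variables x_p inside F -/
def xv (p : Fin 3) : FF := algebraMap (MvPolynomial (Fin 3) ℚ) FF (X p)

/-- seed mutation on the cluster -/
def mutClus (k : Fin 3) (b : Matrix (Fin 3) (Fin 3) ℤ) (z : Fin 3 → FF) : Fin 3 → FF :=
  fun p =>
    if p = k then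
      ((∏ q, z q ^ (max (b q k) 0).toNat) + (∏ q, z q ^ (max (-(b q k)) 0).toNat)) / z k
    else z p

/-- seed mutation -/
def mutSeed (s : Matrix (Fin 3) (Fin 3) ℤ × (Fin 3 → FF)) (k : Fin 3) :
    Matrix (Fin 3) (Fin 3) ℤ × (Fin 3 → FF) :=
  (mutMat k s.1, mutClus k s.1 s.2)

/-- the seed Ξ(𝔴) obtained from the initial seed by mutating along 𝔴 -/
def Xi (c12 c13 c23 : ℤ) (w : List (Fin 3)) : Matrix (Fin 3) (Fin 3) ℤ × (Fin 3 → FF) :=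
  w.foldl mutSeed (B0 c12 c13 c23, xv)

open Classical in
/-- the order of vanishing of z ∈ F at the prime x_q : the unique m with
    z = x_q^m · f/g, f,g prime to x_q (0 if no such m, e.g. z = 0). -/
def ordAt (q : Fin 3) (z : FF) : ℤ :=
  if h : ∃ m : ℤ, ∃ f g : MvPolynomial (Fin 3) ℚ, ¬ (X q ∣ f) ∧ ¬ (X q ∣ g) ∧ g ≠ 0 ∧
      z = (xv q) ^ m * (algebraMap (MvPolynomial (Fin 3) ℚ) FF f) /
            (algebraMap (MvPolynomial (Fin 3) ℚ) FF g)
  then h.choose else 0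

/-- the denominator vector β_p(𝔴) of the p-th cluster variable of Ξ(𝔴) -/
def betaP (c12 c13 c23 : ℤ) (w : List (Fin 3)) (p : Fin 3) : Vec3 :=
  fun q => - ordAt q ((Xi c12 c13 c23 w).2 p)

abbrev V2 := ℤ × ℤ

def Vbase (p : Fin 3) : V2 × V2 × V2 :=
  if p = 0 then ((-1,2), (-1,1), (0,1))
  else if p = 1 then ((0,1), (1,1), (1,0))
  else ((1,0), (1,-1), (2,-1))

def Vstep (t : V2 × V2 × V2) (p : Fin 3) : V2 × V2 × V2 :=
  if p = 0 then (t.2.1 + t.2.2, t.2.1, t.2.2)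
  else if p = 1 then (t.1, t.1 + t.2.2, t.2.2)
  else (t.1, t.2.1, t.1 + t.2.1)

/-- the triple V(𝔴) = (v₁(𝔴), v₂(𝔴), v₃(𝔴)) -/
def VW : List (Fin 3) → V2 × V2 × V2
  | [] => ((0,0),(0,0),(0,0))
  | i :: r => r.foldl Vstep (Vbase i)

/-- the component v_p(𝔴) of V(𝔴) -/
def vComp (p : Fin 3) (t : V2 × V2 × V2) : V2 :=
  if p = 0 then t.1 else if p = 1 then t.2.1 else t.2.2

/-- (b,c) is generic: b ≠ 0, c ≠ 0, b + c ≠ 0 -/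
def Generic (v : V2) : Prop := v.1 ≠ 0 ∧ v.2 ≠ 0 ∧ v.1 + v.2 ≠ 0

/-- (b,c) is primitive: gcd(|b|,|c|) = 1 -/
def Primitive (v : V2) : Prop := Int.gcd v.1 v.2 = 1

/-- the crossing times ℓ/|n|, ℓ = 1, …, |n|-1, tagged with a letter -/
def marks (n : ℤ) (letter : Fin 3) : List (ℚ × Fin 3) :=
  ((List.range n.natAbs).drop 1).map (fun ℓ => ((ℓ : ℚ) / (n.natAbs : ℚ), letter))

/-- the crossing word υ(b,c) of the segment from (0,0) to (b,c) : letters recorded at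
    the crossings with the lines y ∈ ℤ (letter 1), x+y ∈ ℤ (letter 2), x ∈ ℤ (letter 3),
    listed in increasing order of the time parameter. -/
def upsWord (b c : ℤ) : List (Fin 3) :=
  ((marks c 0 ++ marks (b + c) 1 ++ marks b 2).mergeSort (fun s t => s.1 ≤ t.1)).map Prod.snd

/-- β(b,c) = s_{j₁}⋯s_{j_h}(α_{j_{h+1}}) where υ(b,c) = j₁⋯j_{2h+1} -/
def betaVec (c12 c13 c23 : ℤ) (v : V2) : Vec3 :=
  sWord c12 c13 c23 ((upsWord v.1 v.2).take ((upsWord v.1 v.2).length / 2))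
    (alpha ((upsWord v.1 v.2).getD ((upsWord v.1 v.2).length / 2) 0))

/-- φ(𝔳) = β(v_p(𝔳)) where p is the last letter of 𝔳 -/
def phi (c12 c13 c23 : ℤ) (w : List (Fin 3)) : Vec3 :=
  betaVec c12 c13 c23 (vComp (w.getLastD 0) (VW w))

/-- ψ(ŵ), where ŵ = 𝔴𝔳 with 𝔴 the longest acyclic prefix of ŵ -/
def psi (c12 c13 c23 : ℤ) (w : List (Fin 3)) : Vec3 :=
  if w.drop (rho w) = [] then
    sWord c12 c13 c23 (w.take (rho w)).dropLast (alpha ((w.take (rho w)).getLastD 0))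
  else
    sWord c12 c13 c23 (w.take (rho w)) (phi c12 c13 c23 (w.drop (rho w)))


/-- the word (ab)^n : n copies of the two-letter word ab -/
def rep2 (a b : Fin 3) (n : ℕ) : List (Fin 3) := (List.replicate n [a, b]).flatten

namespace CAaux

abbrev RR : Type := MvPolynomial (Fin 3) ℚ
abbrev km : RR →+* FF := algebraMap RR FF

lemma km_inj : Function.Injective (km : RR → FF) :=
  IsFractionRing.injective RR FF

lemma km_ne_zero {f : RR} (h : f ≠ 0) : km f ≠ 0 := by
  intro h0
  exact h (km_inj (by simpa using h0))

/-- nonnegative coefficients -/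
def NN (f : RR) : Prop := ∀ m, 0 ≤ f.coeff m

lemma NN_one : NN (1 : RR) := by
  intro m
  rw [MvPolynomial.coeff_one]
  split <;> norm_num

lemma NN_add {f g : RR} (hf : NN f) (hg : NN g) : NN (f + g) := by
  intro m
  rw [MvPolynomial.coeff_add]
  exact add_nonneg (hf m) (hg m)

lemma NN_mul {f g : RR} (hf : NN f) (hg : NN g) : NN (f * g) := by
  intro m
  classical
  rw [MvPolynomial.coeff_mul]
  exact Finset.sum_nonneg fun x _ => mul_nonneg (hf _) (hg _)

lemma NN_pow {f : RR} (hf : NN f) (n : ℕ) : NN (f ^ n) := by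
  induction n with
  | zero => simpa using NN_one
  | succ k ih => rw [pow_succ]; exact NN_mul ih hf

lemma NN_X (r : Fin 3) : NN (X r : RR) := by
  intro m
  rw [MvPolynomial.coeff_X']
  split <;> norm_num

def monX (a : Fin 3 → ℕ) : RR := ∏ r, (X r : RR) ^ a r

lemma NN_monX (a : Fin 3 → ℕ) : NN (monX a) := by
  unfold monX
  apply Finset.prod_induction _ NN (fun _ _ => NN_mul) NN_one
  intro r _
  exact NN_pow (NN_X r) _

lemma monX_addFun (u v : Fin 3 → ℕ) : monX (fun r => u r + v r) = monX u * monX v := by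
  unfold monX
  rw [← Finset.prod_mul_distrib]
  exact Finset.prod_congr rfl fun r _ => pow_add _ _ _

lemma monX_pow (a : Fin 3 → ℕ) (n : ℕ) : monX a ^ n = monX (fun r => n * a r) := by
  unfold monX
  rw [← Finset.prod_pow]
  exact Finset.prod_congr rfl fun r _ => by rw [← pow_mul, mul_comm]

lemma monX_eq_monomial (a : Fin 3 → ℕ) :
    monX a = monomial (Finsupp.equivFunOnFinite.symm a) 1 := by
  rw [← prod_X_pow_eq_monomial]
  unfold monX
  have hs : ∀ x, (Finsupp.equivFunOnFinite.symm a) x = a x := fun _ => rfl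
  refine (Finset.prod_subset (Finset.subset_univ _) ?_).symm.trans
    (Finset.prod_congr rfl fun x _ => by rw [hs])
  intro x _ hx
  have h0 : (Finsupp.equivFunOnFinite.symm a) x = 0 := by
    simpa [Finsupp.mem_support_iff] using hx
  rw [hs] at h0
  simp [h0]

/-- key: mod by X_i is multiplicative -/
lemma modM_mul (i : Fin 3) (f g : RR) :
    (f * g).modMonomial (Finsupp.single i 1)
      = f.modMonomial (Finsupp.single i 1) * g.modMonomial (Finsupp.single i 1) := by
  classical
  apply MvPolynomial.ext
  intro m
  by_cases hm : Finsupp.single i 1 ≤ m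
  · rw [coeff_modMonomial_of_le _ hm, coeff_mul]
    symm
    apply Finset.sum_eq_zero
    intro x hx
    have hsum : x.1 i + x.2 i = m i := by
      have := Finset.HasAntidiagonal.mem_antidiagonal.mp hx
      rw [← this]; simp
    have hmi : 1 ≤ m i := by simpa using Finsupp.single_le_iff.mp hm
    have hor : 1 ≤ x.1 i ∨ 1 ≤ x.2 i := by omega
    rcases hor with h | h
    · rw [coeff_modMonomial_of_le _ (Finsupp.single_le_iff.mpr h), zero_mul]
    · rw [coeff_modMonomial_of_le _ (Finsupp.single_le_iff.mpr h), mul_zero]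
  · rw [coeff_modMonomial_of_not_le _ hm, coeff_mul, coeff_mul]
    apply Finset.sum_congr rfl
    intro x hx
    have hx' := Finset.HasAntidiagonal.mem_antidiagonal.mp hx
    have hmi : m i = 0 := by
      by_contra h
      exact hm (Finsupp.single_le_iff.mpr (by omega))
    have h1 : x.1 i = 0 ∧ x.2 i = 0 := by
      have : x.1 i + x.2 i = m i := by rw [← hx']; simp
      omega
    rw [coeff_modMonomial_of_not_le, coeff_modMonomial_of_not_le]
    · intro h; have := Finsupp.single_le_iff.mp h; omega
    · intro h; have := Finsupp.single_le_iff.mp h; omega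

/-- divisibility by X i in terms of coefficients -/
lemma ndvd_iff (i : Fin 3) (f : RR) :
    ¬ (X i : RR) ∣ f ↔ ∃ m : Fin 3 →₀ ℕ, m i = 0 ∧ f.coeff m ≠ 0 := by
  classical
  rw [X_dvd_iff_modMonomial_eq_zero]
  constructor
  · intro h
    obtain ⟨m, hm⟩ : ∃ m, (f.modMonomial (Finsupp.single i 1)).coeff m ≠ 0 := by
      by_contra hc
      push_neg at hc
      exact h (MvPolynomial.ext _ _ (by simpa using hc))
    by_cases hle : Finsupp.single i 1 ≤ m
    · rw [coeff_modMonomial_of_le _ hle] at hm; exact absurd rfl hm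
    · rw [coeff_modMonomial_of_not_le _ hle] at hm
      have : ¬ 1 ≤ m i := fun h' => hle (Finsupp.single_le_iff.mpr h')
      exact ⟨m, by omega, hm⟩
  · rintro ⟨m, hmi, hm⟩ h0
    have hle : ¬ Finsupp.single i 1 ≤ m := by
      intro h'; have := Finsupp.single_le_iff.mp h'; omega
    have := coeff_modMonomial_of_not_le (s := Finsupp.single i 1) f hle
    rw [h0] at this
    simp at this
    exact hm this.symm

lemma notdvd_mul {i : Fin 3} {f g : RR} (hf : ¬ (X i : RR) ∣ f) (hg : ¬ (X i : RR) ∣ g) :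
    ¬ (X i : RR) ∣ f * g := by
  rw [X_dvd_iff_modMonomial_eq_zero] at hf hg ⊢
  rw [modM_mul]
  exact mul_ne_zero hf hg

lemma notdvd_pow {i : Fin 3} {f : RR} (hf : ¬ (X i : RR) ∣ f) (n : ℕ) :
    ¬ (X i : RR) ∣ f ^ n := by
  induction n with
  | zero =>
    rw [pow_zero, ndvd_iff]
    exact ⟨0, by simp, by simp⟩
  | succ k ih => rw [pow_succ]; exact notdvd_mul ih hf

lemma notdvd_ne_zero {i : Fin 3} {f : RR} (hf : ¬ (X i : RR) ∣ f) : f ≠ 0 := by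
  rintro rfl; exact hf (dvd_zero _)

lemma ndvd_monX {r : Fin 3} {a : Fin 3 → ℕ} (h : a r = 0) : ¬ (X r : RR) ∣ monX a := by
  rw [monX_eq_monomial, ndvd_iff]
  refine ⟨Finsupp.equivFunOnFinite.symm a, h, ?_⟩
  rw [coeff_monomial, if_pos rfl]
  norm_num

/-- adding something nonnegative preserves non-divisibility -/
lemma ndvd_add_right {r : Fin 3} {A B : RR} (hA : NN A) (hB : NN B)
    (hBr : ¬ (X r : RR) ∣ B) : ¬ (X r : RR) ∣ (A + B) := by
  rw [ndvd_iff] at hBr ⊢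
  obtain ⟨m, hmr, hm⟩ := hBr
  refine ⟨m, hmr, ?_⟩
  rw [MvPolynomial.coeff_add]
  have h1 : 0 < B.coeff m := lt_of_le_of_ne (hB m) (Ne.symm hm)
  have h2 := hA m
  positivity

lemma ndvd_add_left {r : Fin 3} {A B : RR} (hA : NN A) (hB : NN B)
    (hAr : ¬ (X r : RR) ∣ A) : ¬ (X r : RR) ∣ (A + B) := by
  rw [add_comm]; exact ndvd_add_right hB hA hAr

lemma xv_ne_zero (q : Fin 3) : xv q ≠ 0 :=
  km_ne_zero (by exact_mod_cast X_ne_zero q)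

lemma uniq_le {q : Fin 3} {m1 m2 : ℤ} {f1 g1 f2 g2 : RR}
    (hf1 : ¬ (X q : RR) ∣ f1) (hg1 : ¬ (X q : RR) ∣ g1)
    (hf2 : ¬ (X q : RR) ∣ f2) (hg2 : ¬ (X q : RR) ∣ g2)
    (heq : xv q ^ m1 * km f1 / km g1 = xv q ^ m2 * km f2 / km g2)
    (hle : m1 ≤ m2) : m1 = m2 := by
  have hg1' : km g1 ≠ 0 := km_ne_zero (notdvd_ne_zero hg1)
  have hg2' : km g2 ≠ 0 := km_ne_zero (notdvd_ne_zero hg2)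
  have hx : xv q ≠ 0 := xv_ne_zero q
  rw [div_eq_div_iff hg1' hg2'] at heq
  have h2 : xv q ^ m2 = xv q ^ m1 * xv q ^ (m2 - m1) := by
    rw [← zpow_add₀ hx]; ring_nf
  rw [h2] at heq
  have hc : km f1 * km g2 = xv q ^ (m2 - m1) * (km f2 * km g1) := by
    have hxm : xv q ^ m1 ≠ 0 := zpow_ne_zero _ hx
    apply mul_left_cancel₀ hxm
    linear_combination heq
  set nn : ℕ := (m2 - m1).toNat with hnn
  have hcast : ((nn : ℤ)) = m2 - m1 := Int.toNat_of_nonneg (by omega)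
  rw [← hcast, zpow_natCast] at hc
  have hxp : (xv q) ^ nn = km ((X q : RR) ^ nn) := by rw [map_pow]; rfl
  rw [hxp, ← map_mul, ← map_mul, ← map_mul] at hc
  have hpoly : f1 * g2 = (X q : RR) ^ nn * (f2 * g1) := km_inj hc
  by_contra hne
  have hnn1 : nn ≠ 0 := by omega
  have : (X q : RR) ∣ f1 * g2 := by
    rw [hpoly]
    exact Dvd.dvd.mul_right (dvd_pow_self _ hnn1) _
  exact notdvd_mul hf1 hg2 this

lemma ordAt_spec {q : Fin 3} {z : FF} {m : ℤ} {f g : RR}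
    (hf : ¬ (X q : RR) ∣ f) (hg : ¬ (X q : RR) ∣ g) (hg0 : g ≠ 0)
    (hz : z = xv q ^ m * km f / km g) : ordAt q z = m := by
  classical
  have hex : ∃ m' : ℤ, ∃ f' g' : RR, ¬ (X q ∣ f') ∧ ¬ (X q ∣ g') ∧ g' ≠ 0 ∧
      z = (xv q) ^ m' * (algebraMap RR FF f') / (algebraMap RR FF g') :=
    ⟨m, f, g, hf, hg, hg0, hz⟩
  rw [ordAt, dif_pos hex]
  obtain ⟨f', g', hf', hg', hg0', hz'⟩ := hex.choose_spec
  have heq : xv q ^ hex.choose * km f' / km g' = xv q ^ m * km f / km g :=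
    hz'.symm.trans hz
  rcases le_total hex.choose m with h | h
  · exact uniq_le hf' hg' hf hg heq h
  · exact (uniq_le hf hg hf' hg' heq.symm h).symm

lemma monX_zero : monX (fun _ => 0) = 1 := by unfold monX; simp

/-- split off the q-th variable -/

lemma monX_split (q : Fin 3) (a : Fin 3 → ℕ) :
    monX a = (X q : RR) ^ a q * monX (Function.update a q 0) := by
  unfold monX
  rw [← Finset.mul_prod_erase Finset.univ _ (Finset.mem_univ q),
      ← Finset.mul_prod_erase Finset.univ
        (fun r => (X r : RR) ^ (Function.update a q 0 r)) (Finset.mem_univ q)]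
  simp only [Function.update_self, pow_zero, one_mul]
  congr 1
  apply Finset.prod_congr rfl
  intro x hx
  rw [Function.update_of_ne (Finset.mem_erase.mp hx).1]


/-- `z` is a ratio of positive polynomials times a Laurent monomial with
denominator vector `d`. -/
def Rep (d : Vec3) (z : FF) : Prop :=
  ∃ (a b : Fin 3 → ℕ) (f g : RR),
    NN f ∧ NN g ∧ (∀ r, ¬ (X r : RR) ∣ f) ∧ (∀ r, ¬ (X r : RR) ∣ g) ∧
    (∀ r, (a r : ℤ) - (b r : ℤ) = - d r) ∧
    z = km (monX a * f) / km (monX b * g)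

lemma ndvd_one (r : Fin 3) : ¬ (X r : RR) ∣ 1 := by
  rw [ndvd_iff]; exact ⟨0, by simp, by simp⟩

lemma rep_init (p : Fin 3) : Rep (-(alpha p)) (xv p) := by
  refine ⟨(fun r => if r = p then 1 else 0), 0, 1, 1, NN_one, NN_one,
    fun r => ndvd_one r, fun r => ndvd_one r, ?_, ?_⟩
  · intro r
    simp [alpha, Pi.single_apply]
  · have h1 : monX (fun r => if r = p then 1 else 0) = X p := by
      rw [monX_split p]
      have hu : Function.update (fun r => if r = p then 1 else 0) p 0 = (fun _ => 0) := by
        funext r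
        by_cases h : r = p <;> simp [Function.update, h]
      rw [hu, monX_zero]
      simp
    have h0 : monX (0 : Fin 3 → ℕ) = 1 := monX_zero
    rw [h1, h0]
    simp only [mul_one, one_mul, map_one, div_one]
    rfl

lemma rep_ordAt {d : Vec3} {z : FF} (h : Rep d z) (q : Fin 3) : ordAt q z = - d q := by
  obtain ⟨a, b, f, g, hfN, hgN, hfD, hgD, hab, hz⟩ := h
  set a' := Function.update a q 0 with ha'
  set b' := Function.update b q 0 with hb'
  have hfD' : ¬ (X q : RR) ∣ (monX a' * f) := notdvd_mul (ndvd_monX (by simp [ha'])) (hfD q)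
  have hgD' : ¬ (X q : RR) ∣ (monX b' * g) := notdvd_mul (ndvd_monX (by simp [hb'])) (hgD q)
  have hz' : z = xv q ^ (-(d q)) * km (monX a' * f) / km (monX b' * g) := by
    rw [hz, monX_split q a, monX_split q b]
    have e1 : xv q ^ (-(d q)) = xv q ^ ((a q : ℤ)) / xv q ^ ((b q : ℤ)) := by
      rw [← zpow_sub₀ (xv_ne_zero q), hab q]
    rw [e1]
    have e2 : ∀ n : ℕ, xv q ^ ((n : ℤ)) = km ((X q : RR) ^ n) := by
      intro n; rw [zpow_natCast, map_pow]; rfl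
    rw [e2, e2]
    rw [map_mul, map_mul, map_mul, map_mul]
    have hb0 : km ((X q : RR) ^ b q) ≠ 0 := km_ne_zero (pow_ne_zero _ (X_ne_zero q))
    have hg0 : km (monX b' * g) ≠ 0 := km_ne_zero (notdvd_ne_zero hgD')
    rw [← ha', ← hb']
    simp only [map_mul]
    have hb1 : km (monX b') ≠ 0 := km_ne_zero (notdvd_ne_zero (ndvd_monX (r := q) (by simp [hb'])))
    have hg1 : km g ≠ 0 := km_ne_zero (notdvd_ne_zero (hgD q))
    field_simp
  rw [ordAt_spec hfD' hgD' (notdvd_ne_zero hgD') hz']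

lemma monX_ne_zero (a : Fin 3 → ℕ) : monX a ≠ 0 := by
  intro h
  have := congrArg (MvPolynomial.coeff (Finsupp.equivFunOnFinite.symm a)) h
  rw [monX_eq_monomial, coeff_monomial, if_pos rfl] at this
  simpa using this

lemma rep_step (ca cb : ℕ) {da db dj : Vec3} {za zb zj : FF}
    (ha : Rep da za) (hb : Rep db zb) (hj : Rep dj zj) :
    Rep (fun r => max ((ca : ℤ) * da r + (cb : ℤ) * db r) 0 - dj r)
      ((1 + za ^ ca * zb ^ cb) / zj) := by
  obtain ⟨a1, b1, f1, g1, hf1N, hg1N, hf1D, hg1D, hab1, hz1⟩ := ha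
  obtain ⟨a2, b2, f2, g2, hf2N, hg2N, hf2D, hg2D, hab2, hz2⟩ := hb
  obtain ⟨a3, b3, f3, g3, hf3N, hg3N, hf3D, hg3D, hab3, hz3⟩ := hj
  set A : Fin 3 → ℕ := fun r => ca * a1 r + cb * a2 r with hA
  set Bv : Fin 3 → ℕ := fun r => ca * b1 r + cb * b2 r with hBv
  set mv : Fin 3 → ℕ := fun r => min (A r) (Bv r) with hmv
  set F : RR := f1 ^ ca * f2 ^ cb with hF
  set G : RR := g1 ^ ca * g2 ^ cb with hG
  have hFN : NN F := NN_mul (NN_pow hf1N _) (NN_pow hf2N _)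
  have hGN : NN G := NN_mul (NN_pow hg1N _) (NN_pow hg2N _)
  have hFD : ∀ r, ¬ (X r : RR) ∣ F :=
    fun r => notdvd_mul (notdvd_pow (hf1D r) _) (notdvd_pow (hf2D r) _)
  have hGD : ∀ r, ¬ (X r : RR) ∣ G :=
    fun r => notdvd_mul (notdvd_pow (hg1D r) _) (notdvd_pow (hg2D r) _)
  have e1 : (monX a1 * f1) ^ ca * (monX a2 * f2) ^ cb = monX A * F := by
    rw [mul_pow, mul_pow, monX_pow, monX_pow, hF, hA, monX_addFun]
    ring
  have e2 : (monX b1 * g1) ^ ca * (monX b2 * g2) ^ cb = monX Bv * G := by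
    rw [mul_pow, mul_pow, monX_pow, monX_pow, hG, hBv, monX_addFun]
    ring
  have hP : za ^ ca * zb ^ cb = km (monX A * F) / km (monX Bv * G) := by
    rw [hz1, hz2, div_pow, div_pow, div_mul_div_comm, ← map_pow, ← map_pow,
      ← map_pow, ← map_pow, ← map_mul, ← map_mul, e1, e2]
  set N' : RR := monX (fun r => Bv r - mv r) * G + monX (fun r => A r - mv r) * F with hN'
  have hBm : (fun r => mv r + (Bv r - mv r)) = Bv := by
    funext r
    have : mv r ≤ Bv r := min_le_right _ _
    omega
  have hAm : (fun r => mv r + (A r - mv r)) = A := by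
    funext r
    have : mv r ≤ A r := min_le_left _ _
    omega
  have hfac : monX Bv * G + monX A * F = monX mv * N' := by
    have : monX mv * N' = monX mv * monX (fun r => Bv r - mv r) * G
        + monX mv * monX (fun r => A r - mv r) * F := by rw [hN']; ring
    rw [this, ← monX_addFun, ← monX_addFun, hBm, hAm]
  have hNN' : NN N' := NN_add (NN_mul (NN_monX _) hGN) (NN_mul (NN_monX _) hFN)
  have hND : ∀ r, ¬ (X r : RR) ∣ N' := by
    intro r
    rw [hN']
    rcases le_total (A r) (Bv r) with h | h
    · exact ndvd_add_right (NN_mul (NN_monX _) hGN) (NN_mul (NN_monX _) hFN)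
        (notdvd_mul (ndvd_monX (by simp [hmv]; omega)) (hFD r))
    · exact ndvd_add_left (NN_mul (NN_monX _) hGN) (NN_mul (NN_monX _) hFN)
        (notdvd_mul (ndvd_monX (by simp [hmv]; omega)) (hGD r))
  have hden : km (monX Bv * G) ≠ 0 :=
    km_ne_zero (mul_ne_zero (monX_ne_zero _) (notdvd_ne_zero (hGD 0)))
  have hsum : 1 + za ^ ca * zb ^ cb = km (monX mv * N') / km (monX Bv * G) := by
    rw [hP, one_add_div hden, ← map_add, hfac]
  have hdiv : (1 + za ^ ca * zb ^ cb) / zj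
      = km (monX (fun r => mv r + b3 r) * (N' * g3))
        / km (monX (fun r => Bv r + a3 r) * (G * f3)) := by
    rw [hsum, hz3, div_eq_mul_inv (km (monX mv * N') / km (monX Bv * G)), inv_div,
      div_mul_div_comm, ← map_mul, ← map_mul]
    refine congrArg₂ (· / ·) (congrArg km ?_) (congrArg km ?_)
    · rw [monX_addFun mv b3]; ring
    · rw [monX_addFun Bv a3]; ring
  refine ⟨fun r => mv r + b3 r, fun r => Bv r + a3 r, N' * g3, G * f3,
    NN_mul hNN' hg3N, NN_mul hGN hf3N,
    fun r => notdvd_mul (hND r) (hg3D r), fun r => notdvd_mul (hGD r) (hf3D r),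
    ?_, hdiv⟩
  intro r
  dsimp only
  have hST : ((A r : ℤ)) - (Bv r : ℤ) = -((ca : ℤ) * da r + (cb : ℤ) * db r) := by
    rw [hA, hBv]
    push_cast
    linear_combination (ca : ℤ) * hab1 r + (cb : ℤ) * hab2 r
  have hmvr : ((mv r : ℤ)) = min ((A r : ℤ)) ((Bv r : ℤ)) := by
    rw [hmv]; push_cast; rfl
  have h3 := hab3 r
  have hrw : (ca : ℤ) * da r + (cb : ℤ) * db r = (Bv r : ℤ) - (A r : ℤ) := by linarith
  rw [hrw]
  push_cast
  rw [hmvr]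
  omega

/-! ### Combinatorics of reflections along an acyclic word -/

lemma alpha_apply (p r : Fin 3) : alpha p r = if r = p then 1 else 0 := by
  simp [alpha, Pi.single_apply]

lemma alpha_nonneg (p r : Fin 3) : 0 ≤ alpha p r := by
  rw [alpha_apply]; split <;> norm_num

lemma alpha_self (p : Fin 3) : alpha p p = 1 := by simp [alpha_apply]

lemma alpha_ne {p r : Fin 3} (h : r ≠ p) : alpha p r = 0 := by simp [alpha_apply, h]

section Comb

variable (c12 c13 c23 : ℤ)

lemma cart_ne {p q : Fin 3} (h : p ≠ q) :
    cart c12 c13 c23 p q = - cOf c12 c13 c23 p q := by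
  rw [cart, cOf, if_neg h]
  split_ifs <;> ring

lemma cOf_symm (p q : Fin 3) : cOf c12 c13 c23 p q = cOf c12 c13 c23 q p := by
  fin_cases p <;> fin_cases q <;> simp [cOf]

lemma bform_alpha (p q : Fin 3) :
    bform c12 c13 c23 (alpha p) (alpha q) = cart c12 c13 c23 p q := by
  fin_cases p <;> fin_cases q <;>
    simp [bform, alpha, Fin.sum_univ_three, Pi.single_apply, cart]

lemma bform_add_left (u v w : Vec3) :
    bform c12 c13 c23 (u + v) w = bform c12 c13 c23 u w + bform c12 c13 c23 v w := by
  unfold bform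
  rw [← Finset.sum_add_distrib]
  refine Finset.sum_congr rfl fun p _ => ?_
  rw [← Finset.sum_add_distrib]
  refine Finset.sum_congr rfl fun q _ => ?_
  simp [add_mul]

lemma bform_smul_left (z : ℤ) (u w : Vec3) :
    bform c12 c13 c23 (z • u) w = z * bform c12 c13 c23 u w := by
  unfold bform
  rw [Finset.mul_sum]
  refine Finset.sum_congr rfl fun p _ => ?_
  rw [Finset.mul_sum]
  refine Finset.sum_congr rfl fun q _ => ?_
  simp [smul_eq_mul]; ring

lemma srefl_add (p : Fin 3) (u v : Vec3) :
    srefl c12 c13 c23 p (u + v) = srefl c12 c13 c23 p u + srefl c12 c13 c23 p v := by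
  unfold srefl
  rw [bform_add_left]
  funext r
  simp [Pi.smul_apply, smul_eq_mul]
  ring

lemma srefl_smul (p : Fin 3) (z : ℤ) (v : Vec3) :
    srefl c12 c13 c23 p (z • v) = z • srefl c12 c13 c23 p v := by
  unfold srefl
  rw [bform_smul_left]
  funext r
  simp [Pi.smul_apply, smul_eq_mul]
  ring

lemma sWord_nil (v : Vec3) : sWord c12 c13 c23 [] v = v := rfl

lemma sWord_append (w1 w2 : List (Fin 3)) (v : Vec3) :
    sWord c12 c13 c23 (w1 ++ w2) v = sWord c12 c13 c23 w1 (sWord c12 c13 c23 w2 v) := by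
  simp [sWord, List.foldr_append]

lemma sWord_single (a : Fin 3) (v : Vec3) : sWord c12 c13 c23 [a] v = srefl c12 c13 c23 a v := rfl

lemma sWord_add (w : List (Fin 3)) (u v : Vec3) :
    sWord c12 c13 c23 w (u + v) = sWord c12 c13 c23 w u + sWord c12 c13 c23 w v := by
  induction w with
  | nil => rfl
  | cons a t ih => simp only [sWord, List.foldr_cons] at *; rw [ih, srefl_add]

lemma sWord_smul (w : List (Fin 3)) (z : ℤ) (v : Vec3) :
    sWord c12 c13 c23 w (z • v) = z • sWord c12 c13 c23 w v := by
  induction w with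
  | nil => rfl
  | cons a t ih => simp only [sWord, List.foldr_cons] at *; rw [ih, srefl_smul]

lemma sWord_neg (w : List (Fin 3)) (v : Vec3) :
    sWord c12 c13 c23 w (-v) = - sWord c12 c13 c23 w v := by
  have := sWord_smul c12 c13 c23 w (-1) v
  simpa using this

lemma srefl_alpha {a j : Fin 3} (h : a ≠ j) :
    srefl c12 c13 c23 a (alpha j) = alpha j + cOf c12 c13 c23 a j • alpha a := by
  unfold srefl
  rw [bform_alpha, cart_ne c12 c13 c23 (fun hh => h hh.symm), cOf_symm c12 c13 c23 j a]
  funext r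
  simp [Pi.smul_apply, smul_eq_mul]
  try ring

lemma srefl_alpha_self (a : Fin 3) :
    srefl c12 c13 c23 a (alpha a) = - alpha a := by
  unfold srefl
  rw [bform_alpha, cart, if_pos rfl]
  funext r
  simp [Pi.smul_apply, smul_eq_mul]
  ring

lemma sWord_concat_alpha {a j : Fin 3} (w : List (Fin 3)) (h : a ≠ j) :
    sWord c12 c13 c23 (w ++ [a]) (alpha j)
      = sWord c12 c13 c23 w (alpha j) + cOf c12 c13 c23 a j • sWord c12 c13 c23 w (alpha a) := by
  rw [sWord_append, sWord_single, srefl_alpha c12 c13 c23 h, sWord_add, sWord_smul]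

lemma sWord_concat_self (w : List (Fin 3)) (a : Fin 3) :
    sWord c12 c13 c23 (w ++ [a]) (alpha a) = - sWord c12 c13 c23 w (alpha a) := by
  rw [sWord_append, sWord_single, srefl_alpha_self, sWord_neg]

variable (ℓ : ℕ → Fin 3)

def wl (n : ℕ) : List (Fin 3) := (List.range n).map ℓ

lemma wl_zero : wl ℓ 0 = [] := rfl

lemma wl_succ (n : ℕ) : wl ℓ (n + 1) = wl ℓ n ++ [ℓ n] := by
  simp [wl, List.range_succ]

def gam (n : ℕ) : Vec3 := sWord c12 c13 c23 (wl ℓ n) (alpha (ℓ n))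

def Aw (n : ℕ) : Vec3 := sWord c12 c13 c23 (wl ℓ n) (alpha (ℓ (n + 1)))

def Bw (n : ℕ) : Vec3 := sWord c12 c13 c23 (wl ℓ n) (alpha (ℓ (n + 2)))

def Dcl : ℕ → Fin 3 → Vec3
  | 0 => fun p => - alpha p
  | (n + 1) => fun p => if p = ℓ n then gam c12 c13 c23 ℓ n else Dcl n p

variable {ℓ}
variable (hper : ∀ n, ℓ (n + 3) = ℓ n)
    (hdist : ∀ n, ℓ n ≠ ℓ (n + 1) ∧ ℓ n ≠ ℓ (n + 2) ∧ ℓ (n + 1) ≠ ℓ (n + 2))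
    (hc : ∀ p q, 2 ≤ cOf c12 c13 c23 p q)

section
include hdist

lemma gam_succ (n : ℕ) (r : Fin 3) :
    gam c12 c13 c23 ℓ (n + 1) r
      = Aw c12 c13 c23 ℓ n r + cOf c12 c13 c23 (ℓ n) (ℓ (n + 1)) * gam c12 c13 c23 ℓ n r := by
  have h := sWord_concat_alpha c12 c13 c23 (wl ℓ n) (hdist n).1
  have : gam c12 c13 c23 ℓ (n+1) = Aw c12 c13 c23 ℓ n
      + cOf c12 c13 c23 (ℓ n) (ℓ (n+1)) • gam c12 c13 c23 ℓ n := by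
    rw [gam, wl_succ, h]; rfl
  rw [this]
  simp [Pi.smul_apply, smul_eq_mul]

lemma Aw_succ (n : ℕ) (r : Fin 3) :
    Aw c12 c13 c23 ℓ (n + 1) r
      = Bw c12 c13 c23 ℓ n r + cOf c12 c13 c23 (ℓ n) (ℓ (n + 2)) * gam c12 c13 c23 ℓ n r := by
  have h := sWord_concat_alpha c12 c13 c23 (wl ℓ n) (hdist n).2.1
  have : Aw c12 c13 c23 ℓ (n+1) = Bw c12 c13 c23 ℓ n
      + cOf c12 c13 c23 (ℓ n) (ℓ (n+2)) • gam c12 c13 c23 ℓ n := by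
    rw [Aw, wl_succ, h]; rfl
  rw [this]
  simp [Pi.smul_apply, smul_eq_mul]

end

include hper in
lemma Bw_succ (n : ℕ) : Bw c12 c13 c23 ℓ (n + 1) = - gam c12 c13 c23 ℓ n := by
  rw [Bw, wl_succ, show ℓ (n + 1 + 2) = ℓ n from hper n, sWord_concat_self]
  rfl

lemma gam_zero : gam c12 c13 c23 ℓ 0 = alpha (ℓ 0) := rfl
lemma Aw_zero : Aw c12 c13 c23 ℓ 0 = alpha (ℓ 1) := rfl
lemma Bw_zero : Bw c12 c13 c23 ℓ 0 = alpha (ℓ 2) := rfl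

include hper hdist hc in
lemma gam_pos : ∀ n, (∀ r, 0 ≤ gam c12 c13 c23 ℓ n r) ∧ (∀ r, 0 ≤ Aw c12 c13 c23 ℓ n r)
    ∧ (∀ r, gam c12 c13 c23 ℓ n r ≤ gam c12 c13 c23 ℓ (n + 1) r) := by
  intro n
  induction n using Nat.strong_induction_on with
  | _ n ih =>
    have hg0 : ∀ r, 0 ≤ gam c12 c13 c23 ℓ n r := by
      match n with
      | 0 => exact fun r => alpha_nonneg _ _
      | m + 1 =>
        intro r
        have h1 := (ih m (by omega)).1 r
        have h2 := (ih m (by omega)).2.2 r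
        omega
    have hA0 : ∀ r, 0 ≤ Aw c12 c13 c23 ℓ n r := by
      match n with
      | 0 => exact fun r => by rw [Aw_zero]; exact alpha_nonneg _ _
      | 1 =>
        intro r
        rw [Aw_succ c12 c13 c23 hdist 0 r, Bw_zero]
        have := alpha_nonneg (ℓ 2) r
        have hg := alpha_nonneg (ℓ 0) r
        have h2 := hc (ℓ 0) (ℓ 2)
        rw [gam_zero]
        nlinarith
      | m + 2 =>
        intro r
        rw [Aw_succ c12 c13 c23 hdist (m+1) r, Bw_succ c12 c13 c23 hper m,
          show (m+1)+2 = m+3 from by omega]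
        have h1 := (ih m (by omega)).1 r
        have h2 := (ih m (by omega)).2.2 r
        have h3 := (ih (m+1) (by omega)).1 r
        have h4 := hc (ℓ (m+1)) (ℓ (m+3))
        have h5 : gam c12 c13 c23 ℓ (m+1) r ≤
            cOf c12 c13 c23 (ℓ (m+1)) (ℓ (m+3)) * gam c12 c13 c23 ℓ (m+1) r := by nlinarith
        simp only [Pi.neg_apply]
        omega
    refine ⟨hg0, hA0, fun r => ?_⟩
    rw [gam_succ c12 c13 c23 hdist n r]
    have h1 := hg0 r
    have h2 := hA0 r
    have h3 := hc (ℓ n) (ℓ (n+1))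
    nlinarith

lemma Dcl_succ_self (n : ℕ) : Dcl c12 c13 c23 ℓ (n + 1) (ℓ n) = gam c12 c13 c23 ℓ n := by
  simp [Dcl]

lemma Dcl_succ_ne {p : Fin 3} {n : ℕ} (h : p ≠ ℓ n) :
    Dcl c12 c13 c23 ℓ (n + 1) p = Dcl c12 c13 c23 ℓ n p := by
  simp [Dcl, h]

lemma Dcl_last {t n : ℕ} (h : t < n) (hm : ∀ u, t < u → u < n → ℓ u ≠ ℓ t) :
    Dcl c12 c13 c23 ℓ n (ℓ t) = gam c12 c13 c23 ℓ t := by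
  induction n with
  | zero => omega
  | succ m ih =>
    rcases Nat.lt_succ_iff_lt_or_eq.mp h with h' | h'
    · rw [Dcl_succ_ne c12 c13 c23 (Ne.symm (hm m h' (by omega)))]
      exact ih h' fun u hu1 hu2 => hm u hu1 (by omega)
    · subst h'
      exact Dcl_succ_self c12 c13 c23 t

lemma Dcl_none {p : Fin 3} {n : ℕ} (h : ∀ t < n, ℓ t ≠ p) :
    Dcl c12 c13 c23 ℓ n p = - alpha p := by
  induction n with
  | zero => rfl
  | succ m ih =>
    rw [Dcl_succ_ne c12 c13 c23 (Ne.symm (h m (by omega)))]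
    exact ih fun t ht => h t (by omega)

end Comb

lemma fin3_cases : ∀ {a b c q : Fin 3}, a ≠ b → a ≠ c → b ≠ c → q ≠ a → q = b ∨ q = c := by
  decide

section DstepSec

variable (c12 c13 c23 : ℤ) {ℓ : ℕ → Fin 3}
variable (hper : ∀ n, ℓ (n + 3) = ℓ n)
    (hdist : ∀ n, ℓ n ≠ ℓ (n + 1) ∧ ℓ n ≠ ℓ (n + 2) ∧ ℓ (n + 1) ≠ ℓ (n + 2))
    (hc : ∀ p q, 2 ≤ cOf c12 c13 c23 p q)

include hper hdist hc in
lemma Dstep_eq (n : ℕ) (r : Fin 3) :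
    max (cOf c12 c13 c23 (ℓ (n+1)) (ℓ n) * Dcl c12 c13 c23 ℓ n (ℓ (n+1)) r
       + cOf c12 c13 c23 (ℓ (n+2)) (ℓ n) * Dcl c12 c13 c23 ℓ n (ℓ (n+2)) r) 0
     - Dcl c12 c13 c23 ℓ n (ℓ n) r = gam c12 c13 c23 ℓ n r := by
  have hcnn : ∀ p q, (0:ℤ) ≤ cOf c12 c13 c23 p q := fun p q => by linarith [hc p q]
  match n with
  | 0 =>
    have hD : Dcl c12 c13 c23 ℓ 0 = fun p => - alpha p := rfl
    rw [hD, gam_zero]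
    simp only [Pi.neg_apply, mul_neg]
    have h1 : 0 ≤ cOf c12 c13 c23 (ℓ (0+1)) (ℓ 0) * alpha (ℓ (0+1)) r :=
      mul_nonneg (hcnn _ _) (alpha_nonneg _ _)
    have h2 : 0 ≤ cOf c12 c13 c23 (ℓ (0+2)) (ℓ 0) * alpha (ℓ (0+2)) r :=
      mul_nonneg (hcnn _ _) (alpha_nonneg _ _)
    omega
  | 1 =>
    have e3 : ℓ (1+2) = ℓ 0 := hper 0
    have h01 : ℓ 0 ≠ ℓ (0+1) := (hdist 0).1
    have h02 : ℓ 0 ≠ ℓ (0+2) := (hdist 0).2.1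
    have d2 : Dcl c12 c13 c23 ℓ (0+1) (ℓ (1+1)) = Dcl c12 c13 c23 ℓ 0 (ℓ (1+1)) :=
      Dcl_succ_ne c12 c13 c23 (show ℓ (1+1) ≠ ℓ 0 from Ne.symm h02)
    have d0 : Dcl c12 c13 c23 ℓ (0+1) (ℓ 0) = gam c12 c13 c23 ℓ 0 :=
      Dcl_succ_self c12 c13 c23 0
    have d1 : Dcl c12 c13 c23 ℓ (0+1) (ℓ 1) = Dcl c12 c13 c23 ℓ 0 (ℓ 1) :=
      Dcl_succ_ne c12 c13 c23 (show ℓ 1 ≠ ℓ 0 from Ne.symm h01)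
    have hg1 := gam_succ c12 c13 c23 hdist 0 r
    rw [show (0:ℕ)+1 = 1 from rfl] at d2 d0 d1 hg1
    rw [e3, d2, d0, d1, hg1, Aw_zero, gam_zero]
    have hD : Dcl c12 c13 c23 ℓ 0 = fun p => - alpha p := rfl
    rw [hD]
    simp only [Pi.neg_apply, mul_neg]
    simp only [Nat.reduceAdd] at h01 h02 ⊢
    by_cases hr : r = ℓ 0
    · rw [hr, alpha_self, alpha_ne h02]
      have := hcnn (ℓ 0) (ℓ 1)
      omega
    · rw [alpha_ne hr]
      have h2 : 0 ≤ cOf c12 c13 c23 (ℓ 2) (ℓ 1) * alpha (ℓ 2) r :=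
        mul_nonneg (hcnn _ _) (alpha_nonneg _ _)
      omega
  | 2 =>
    have e3 : ℓ (2+1) = ℓ 0 := hper 0
    have e4 : ℓ (2+2) = ℓ 1 := hper 1
    have h01 : ℓ 0 ≠ ℓ 1 := by have := (hdist 0).1; rwa [show (0:ℕ)+1 = 1 from rfl] at this
    have d0 : Dcl c12 c13 c23 ℓ 2 (ℓ 0) = gam c12 c13 c23 ℓ 0 := by
      have s1 : Dcl c12 c13 c23 ℓ (1+1) (ℓ 0) = Dcl c12 c13 c23 ℓ 1 (ℓ 0) :=
        Dcl_succ_ne c12 c13 c23 h01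
      have s2 : Dcl c12 c13 c23 ℓ (0+1) (ℓ 0) = gam c12 c13 c23 ℓ 0 :=
        Dcl_succ_self c12 c13 c23 0
      rw [show (1:ℕ)+1 = 2 from rfl] at s1
      rw [show (0:ℕ)+1 = 1 from rfl] at s2
      rw [s1, s2]
    have d1 : Dcl c12 c13 c23 ℓ 2 (ℓ 1) = gam c12 c13 c23 ℓ 1 := by
      have := Dcl_succ_self c12 c13 c23 (ℓ := ℓ) 1
      rwa [show (1:ℕ)+1 = 2 from rfl] at this
    have d2 : Dcl c12 c13 c23 ℓ 2 (ℓ 2) = - alpha (ℓ 2) := by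
      have h12 : ℓ 2 ≠ ℓ 1 := by
        have := (hdist 0).2.2
        rw [show (0:ℕ)+1 = 1 from rfl, show (0:ℕ)+2 = 2 from rfl] at this
        exact this.symm
      have h02' : ℓ 2 ≠ ℓ 0 := by
        have := (hdist 0).2.1
        rw [show (0:ℕ)+2 = 2 from rfl] at this
        exact this.symm
      have s1 : Dcl c12 c13 c23 ℓ (1+1) (ℓ 2) = Dcl c12 c13 c23 ℓ 1 (ℓ 2) :=
        Dcl_succ_ne c12 c13 c23 h12
      have s2 : Dcl c12 c13 c23 ℓ (0+1) (ℓ 2) = Dcl c12 c13 c23 ℓ 0 (ℓ 2) :=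
        Dcl_succ_ne c12 c13 c23 h02'
      rw [show (1:ℕ)+1 = 2 from rfl] at s1
      rw [show (0:ℕ)+1 = 1 from rfl] at s2
      rw [s1, s2]
      rfl
    rw [e3, e4, d0, d1, d2]
    have hg2 := gam_succ c12 c13 c23 hdist 1 r
    rw [show (1:ℕ)+1 = 2 from rfl] at hg2
    have hA1 := Aw_succ c12 c13 c23 hdist 0 r
    rw [show (0:ℕ)+1 = 1 from rfl, show (0:ℕ)+2 = 2 from rfl] at hA1
    rw [hg2, hA1, Bw_zero, gam_zero]
    have hp0 := (gam_pos c12 c13 c23 hper hdist hc 0).1 r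
    have hp1 := (gam_pos c12 c13 c23 hper hdist hc 1).1 r
    rw [gam_zero] at hp0
    have m0 : 0 ≤ cOf c12 c13 c23 (ℓ 0) (ℓ 2) * alpha (ℓ 0) r :=
      mul_nonneg (hcnn _ _) hp0
    have m1 : 0 ≤ cOf c12 c13 c23 (ℓ 1) (ℓ 2) * gam c12 c13 c23 ℓ 1 r :=
      mul_nonneg (hcnn _ _) hp1
    simp only [Pi.neg_apply]
    omega
  | (m+3) =>
    have e4 : ℓ (m+3+1) = ℓ (m+1) := by
      rw [show m+3+1 = (m+1)+3 from by omega]; exact hper (m+1)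
    have e5 : ℓ (m+3+2) = ℓ (m+2) := by
      rw [show m+3+2 = (m+2)+3 from by omega]; exact hper (m+2)
    have e3 : ℓ (m+3) = ℓ m := hper m
    have d1 : Dcl c12 c13 c23 ℓ (m+3) (ℓ (m+1)) = gam c12 c13 c23 ℓ (m+1) := by
      have s1 : Dcl c12 c13 c23 ℓ ((m+2)+1) (ℓ (m+1)) = Dcl c12 c13 c23 ℓ (m+2) (ℓ (m+1)) :=
        Dcl_succ_ne c12 c13 c23 (hdist (m+1)).1
      rw [show (m+2)+1 = m+3 from by omega] at s1
      rw [s1]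
      exact Dcl_succ_self c12 c13 c23 (m+1)
    have d2 : Dcl c12 c13 c23 ℓ (m+3) (ℓ (m+2)) = gam c12 c13 c23 ℓ (m+2) := by
      have := Dcl_succ_self c12 c13 c23 (ℓ := ℓ) (m+2)
      rwa [show (m+2)+1 = m+3 from by omega] at this
    have d0 : Dcl c12 c13 c23 ℓ (m+3) (ℓ m) = gam c12 c13 c23 ℓ m := by
      have s1 : Dcl c12 c13 c23 ℓ ((m+2)+1) (ℓ m) = Dcl c12 c13 c23 ℓ (m+2) (ℓ m) :=
        Dcl_succ_ne c12 c13 c23 (hdist m).2.1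
      have s2 : Dcl c12 c13 c23 ℓ ((m+1)+1) (ℓ m) = Dcl c12 c13 c23 ℓ (m+1) (ℓ m) :=
        Dcl_succ_ne c12 c13 c23 (hdist m).1
      rw [show (m+2)+1 = m+3 from by omega] at s1
      rw [show (m+1)+1 = m+2 from by omega] at s2
      rw [s1, s2]
      exact Dcl_succ_self c12 c13 c23 m
    rw [e4, e5, e3, d1, d2, d0]
    have hg3 := gam_succ c12 c13 c23 hdist (m+2) r
    rw [show (m+2)+1 = m+3 from by omega] at hg3
    have hA2 := Aw_succ c12 c13 c23 hdist (m+1) r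
    rw [show (m+1)+1 = m+2 from by omega, show (m+1)+2 = m+3 from by omega] at hA2
    have hB := Bw_succ c12 c13 c23 hper m
    rw [hg3, hA2, hB, e3]
    have hp0 := (gam_pos c12 c13 c23 hper hdist hc m).1 r
    have hp1 := (gam_pos c12 c13 c23 hper hdist hc (m+1)).1 r
    have hp2 := (gam_pos c12 c13 c23 hper hdist hc (m+2)).1 r
    have m1 : 0 ≤ cOf c12 c13 c23 (ℓ (m+1)) (ℓ m) * gam c12 c13 c23 ℓ (m+1) r :=
      mul_nonneg (hcnn _ _) hp1
    have m2 : 0 ≤ cOf c12 c13 c23 (ℓ (m+2)) (ℓ m) * gam c12 c13 c23 ℓ (m+2) r :=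
      mul_nonneg (hcnn _ _) hp2
    simp only [Pi.neg_apply]
    omega

end DstepSec

lemma prod3 (g : Fin 3 → FF) {j a b : Fin 3} (hja : j ≠ a) (hjb : j ≠ b) (hab : a ≠ b) :
    ∏ q, g q = g j * (g a * g b) := by
  fin_cases j <;> fin_cases a <;> fin_cases b <;>
    simp_all [Fin.prod_univ_three] <;> ring

/-- sign condition on the exchange matrix at step n -/
def SC (c12 c13 c23 ε : ℤ) (ℓ : ℕ → Fin 3) (n : ℕ) (E : Matrix (Fin 3) (Fin 3) ℤ) : Prop :=
  (∀ p q, E q p = - E p q) ∧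
  ε * E (ℓ n) (ℓ (n+1)) = cOf c12 c13 c23 (ℓ n) (ℓ (n+1)) ∧
  ε * E (ℓ n) (ℓ (n+2)) = cOf c12 c13 c23 (ℓ n) (ℓ (n+2)) ∧
  ε * E (ℓ (n+1)) (ℓ (n+2)) = cOf c12 c13 c23 (ℓ (n+1)) (ℓ (n+2))

theorem main (c12 c13 c23 ε : ℤ) {ℓ : ℕ → Fin 3}
    (hper : ∀ n, ℓ (n + 3) = ℓ n)
    (hdist : ∀ n, ℓ n ≠ ℓ (n + 1) ∧ ℓ n ≠ ℓ (n + 2) ∧ ℓ (n + 1) ≠ ℓ (n + 2))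
    (hc : ∀ p q, 2 ≤ cOf c12 c13 c23 p q)
    (hε : ε = 1 ∨ ε = -1)
    (hbase : SC c12 c13 c23 ε ℓ 0 (B0 c12 c13 c23)) :
    ∀ n, SC c12 c13 c23 ε ℓ n (Xi c12 c13 c23 (wl ℓ n)).1
      ∧ ∀ p, Rep (Dcl c12 c13 c23 ℓ n p) ((Xi c12 c13 c23 (wl ℓ n)).2 p) := by
  have hcnn : ∀ p q, (0:ℤ) ≤ cOf c12 c13 c23 p q := fun p q => by linarith [hc p q]
  have hee : ε * ε = 1 := by rcases hε with rfl | rfl <;> norm_num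
  intro n
  induction n with
  | zero => exact ⟨hbase, fun p => rep_init p⟩
  | succ n ih =>
    obtain ⟨hSC, hRep⟩ := ih
    have hXi : Xi c12 c13 c23 (wl ℓ (n+1)) = mutSeed (Xi c12 c13 c23 (wl ℓ n)) (ℓ n) := by
      rw [wl_succ]
      simp [Xi, List.foldl_append]
    set S := Xi c12 c13 c23 (wl ℓ n) with hS
    set E := S.1 with hE
    set z := S.2 with hz
    set j := ℓ n with hj
    set a := ℓ (n+1) with ha
    set b := ℓ (n+2) with hb
    have hja : j ≠ a := (hdist n).1
    have hjb : j ≠ b := (hdist n).2.1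
    have hab : a ≠ b := (hdist n).2.2
    have hEjj : E j j = 0 := by have := hSC.1 j j; omega
    have hEja : E j a = ε * cOf c12 c13 c23 j a := by
      have h := hSC.2.1
      rcases hε with rfl | rfl <;> linarith
    have hEjb : E j b = ε * cOf c12 c13 c23 j b := by
      have h := hSC.2.2.1
      rcases hε with rfl | rfl <;> linarith
    have hEaj : E a j = -(ε * cOf c12 c13 c23 j a) := by rw [hSC.1 j a, hEja]
    have hEbj : E b j = -(ε * cOf c12 c13 c23 j b) := by rw [hSC.1 j b, hEjb]
    have e3 : ℓ (n+1+2) = j := by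
      rw [show n+1+2 = n+3 from by omega, hper n]
    have e2 : ℓ (n+1+1) = b := by rw [show n+1+1 = n+2 from by omega]
    -- the mutated matrix is the row/column flip
    have hmut : mutMat j E = Matrix.of fun p q => if p = j ∨ q = j then - E p q else E p q := by
      ext p q
      by_cases h : p = j ∨ q = j
      · simp [mutMat, h]
      · push_neg at h
        obtain ⟨hp, hq⟩ := h
        obtain ⟨cp, hcp, hpj⟩ : ∃ c, 0 ≤ c ∧ E p j = -(ε * c) := by
          rcases fin3_cases hja hjb hab hp with rfl | rfl
          exacts [⟨_, hcnn j a, hEaj⟩, ⟨_, hcnn j b, hEbj⟩]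
        obtain ⟨cq, hcq, hjq⟩ : ∃ c, 0 ≤ c ∧ E j q = ε * c := by
          rcases fin3_cases hja hjb hab hq with rfl | rfl
          exacts [⟨_, hcnn j a, hEja⟩, ⟨_, hcnn j b, hEjb⟩]
        have hple : E p j * E j q ≤ 0 := by
          rw [hpj, hjq]
          have h1 : -(ε * cp) * (ε * cq) = -(cp * cq) := by
            linear_combination (-(cp * cq)) * hee
          rw [h1]
          exact neg_nonpos.mpr (mul_nonneg hcp hcq)
        simp only [mutMat, Matrix.of_apply, if_neg (show ¬ (p = j ∨ q = j) by tauto)]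
        rw [max_eq_right hple, mul_zero, add_zero]
    constructor
    · -- sign condition at n+1
      rw [hXi]
      show SC c12 c13 c23 ε ℓ (n+1) (mutMat j E)
      rw [hmut]
      refine ⟨?_, ?_, ?_, ?_⟩
      · intro p q
        simp only [Matrix.of_apply]
        by_cases h : p = j ∨ q = j
        · rw [if_pos (Or.symm h), if_pos h, hSC.1 p q]
        · rw [if_neg (show ¬ (q = j ∨ p = j) by tauto), if_neg h]
          exact hSC.1 p q
      · rw [e2]
        simp only [Matrix.of_apply, if_neg (show ¬ (ℓ (n+1) = j ∨ b = j) from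
          fun h => h.elim (fun h' => hja h'.symm) (fun h' => hjb h'.symm))]
        exact hSC.2.2.2
      · rw [e3]
        simp only [Matrix.of_apply]
        split_ifs with hsp
        · rw [hEaj, cOf_symm c12 c13 c23 (ℓ (n+1)) j]
          linear_combination (cOf c12 c13 c23 j a) * hee
        · exact absurd (Or.inr trivial) hsp
      · rw [e2, e3]
        simp only [Matrix.of_apply]
        split_ifs with hsp
        · rw [hEbj, cOf_symm c12 c13 c23 b j]
          linear_combination (cOf c12 c13 c23 j b) * hee
        · exact absurd (Or.inr trivial) hsp
    · -- Rep at n+1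
      intro p
      rw [hXi]
      show Rep (Dcl c12 c13 c23 ℓ (n+1) p) (mutClus j E z p)
      by_cases hp : p = j
      · rw [hp]
        set ca : ℕ := (cOf c12 c13 c23 j a).toNat with hca
        set cb : ℕ := (cOf c12 c13 c23 j b).toNat with hcb
        have hV : mutClus j E z j = (1 + z a ^ ca * z b ^ cb) / z j := by
          simp only [mutClus]
          rw [if_pos trivial,
            prod3 (fun q => z q ^ (max (E q j) 0).toNat) hja hjb hab,
            prod3 (fun q => z q ^ (max (-(E q j)) 0).toNat) hja hjb hab]
          rcases hε with rfl | rfl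
          · have x1 : (max (E j j) 0).toNat = 0 := by rw [hEjj]; rfl
            have x2 : (max (E a j) 0).toNat = 0 := by
              rw [hEaj]; have := hcnn j a; omega
            have x3 : (max (E b j) 0).toNat = 0 := by
              rw [hEbj]; have := hcnn j b; omega
            have y1 : (max (-(E j j)) 0).toNat = 0 := by rw [hEjj]; rfl
            have y2 : (max (-(E a j)) 0).toNat = ca := by
              rw [hEaj, hca]; have := hcnn j a; omega
            have y3 : (max (-(E b j)) 0).toNat = cb := by
              rw [hEbj, hcb]; have := hcnn j b; omega
            rw [x1, x2, x3, y1, y2, y3]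
            simp [pow_zero]
          · have x1 : (max (E j j) 0).toNat = 0 := by rw [hEjj]; rfl
            have x2 : (max (E a j) 0).toNat = ca := by
              rw [hEaj, hca]; have := hcnn j a; omega
            have x3 : (max (E b j) 0).toNat = cb := by
              rw [hEbj, hcb]; have := hcnn j b; omega
            have y1 : (max (-(E j j)) 0).toNat = 0 := by rw [hEjj]; rfl
            have y2 : (max (-(E a j)) 0).toNat = 0 := by
              rw [hEaj]; have := hcnn j a; omega
            have y3 : (max (-(E b j)) 0).toNat = 0 := by
              rw [hEbj]; have := hcnn j b; omega
            rw [x1, x2, x3, y1, y2, y3]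
            simp [pow_zero]
            rw [add_comm]
        rw [hV]
        have hstep := rep_step ca cb (hRep a) (hRep b) (hRep j)
        have hvec : (fun r => max ((ca : ℤ) * Dcl c12 c13 c23 ℓ n a r
              + (cb : ℤ) * Dcl c12 c13 c23 ℓ n b r) 0 - Dcl c12 c13 c23 ℓ n j r)
            = Dcl c12 c13 c23 ℓ (n+1) j := by
          rw [Dcl_succ_self]
          funext r
          have hca' : ((ca : ℤ)) = cOf c12 c13 c23 a j := by
            rw [hca, Int.toNat_of_nonneg (hcnn j a), cOf_symm]
          have hcb' : ((cb : ℤ)) = cOf c12 c13 c23 b j := by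
            rw [hcb, Int.toNat_of_nonneg (hcnn j b), cOf_symm]
          rw [hca', hcb']
          exact Dstep_eq c12 c13 c23 hper hdist hc n r
        rw [← hvec]
        exact hstep
      · simp only [mutClus]
        rw [if_neg hp, Dcl_succ_ne c12 c13 c23 (show p ≠ ℓ n from hp)]
        exact hRep p

lemma wl_getD {ℓ : ℕ → Fin 3} {n t : ℕ} (h : t < n) : (wl ℓ n).getD t 0 = ℓ t := by
  have hlen : t < (wl ℓ n).length := by simpa [wl] using h
  rw [List.getD_eq_getElem _ _ hlen]
  simp [wl]

lemma wl_take {ℓ : ℕ → Fin 3} {n t : ℕ} (h : t ≤ n) : (wl ℓ n).take t = wl ℓ t := by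
  simp [wl, ← List.map_take, List.take_range, Nat.min_eq_left h]

lemma list_eq_wl (w : List (Fin 3)) (ℓ : ℕ → Fin 3)
    (h : ∀ t < w.length, w.getD t 0 = ℓ t) : w = wl ℓ w.length := by
  apply List.ext_getElem (by simp [wl])
  intro i h1 h2
  have hd := h i h1
  rw [List.getD_eq_getElem _ _ h1] at hd
  rw [hd]
  simp [wl]

lemma final (c12 c13 c23 ε : ℤ) {ℓ : ℕ → Fin 3}
    (hper : ∀ n, ℓ (n + 3) = ℓ n)
    (hdist : ∀ n, ℓ n ≠ ℓ (n + 1) ∧ ℓ n ≠ ℓ (n + 2) ∧ ℓ (n + 1) ≠ ℓ (n + 2))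
    (hc : ∀ p q, 2 ≤ cOf c12 c13 c23 p q)
    (hε : ε = 1 ∨ ε = -1)
    (hbase : SC c12 c13 c23 ε ℓ 0 (B0 c12 c13 c23))
    (w : List (Fin 3)) (hw : w = wl ℓ w.length) (p : Fin 3) :
    (∀ t, t < w.length → w.getD t 0 = p →
        (∀ u, t < u → u < w.length → w.getD u 0 ≠ p) →
        betaP c12 c13 c23 w p = sWord c12 c13 c23 (w.take t) (alpha p)) ∧
    (p ∉ w → betaP c12 c13 c23 w p = - alpha p) := by
  have hβ : betaP c12 c13 c23 w p = Dcl c12 c13 c23 ℓ w.length p := by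
    have hR := (main c12 c13 c23 ε hper hdist hc hε hbase w.length).2 p
    rw [← hw] at hR
    funext q
    show - ordAt q ((Xi c12 c13 c23 w).2 p) = _
    rw [rep_ordAt hR q, neg_neg]
  constructor
  · intro t ht hp hmax
    have hℓt : ℓ t = p := by
      rw [hw, wl_getD (ℓ := ℓ) ht] at hp
      exact hp
    have hm : ∀ u, t < u → u < w.length → ℓ u ≠ ℓ t := by
      intro u h1 h2 heq
      refine hmax u h1 h2 ?_
      rw [hw, wl_getD (ℓ := ℓ) h2, heq, hℓt]
    rw [hβ, ← hℓt, Dcl_last c12 c13 c23 ht hm]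
    show sWord c12 c13 c23 (wl ℓ t) (alpha (ℓ t)) = _
    rw [show w.take t = wl ℓ t from by rw [hw, wl_take (le_of_lt ht)]]
  · intro hp
    have hnone : ∀ t < w.length, ℓ t ≠ p := by
      intro t ht heq
      apply hp
      rw [← heq, ← wl_getD (ℓ := ℓ) ht, ← hw]
      have ht' : t < w.length := ht
      rw [List.getD_eq_getElem _ _ ht']
      exact List.getElem_mem _
    rw [hβ, Dcl_none c12 c13 c23 hnone]

end CAaux

theorem stmt1 (c12 c13 c23 : ℤ) (h12 : 2 ≤ c12) (h13 : 2 ≤ c13) (h23 : 2 ≤ c23)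
    (w : List (Fin 3)) (hne : w ≠ []) (hA : Acyclic w) (p : Fin 3) :
    (∀ t, t < w.length → w.getD t 0 = p →
        (∀ u, t < u → u < w.length → w.getD u 0 ≠ p) →
        betaP c12 c13 c23 w p = sWord c12 c13 c23 (w.take t) (alpha p)) ∧
    (p ∉ w → betaP c12 c13 c23 w p = - alpha p) := by
  open Fin.NatCast in (
  have hcast3 : ∀ n : ℕ, ((n + 3 : ℕ) : Fin 3) = ((n : ℕ) : Fin 3) := by
    intro n
    exact Fin.ext (by simp [Fin.val_natCast, Nat.add_mod_right])
  have hc : ∀ p q, 2 ≤ cOf c12 c13 c23 p q := by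
    intro p q
    fin_cases p <;> fin_cases q <;> simp [cOf] <;> omega
  rcases hA with hA | hA
  · -- prefix of 123123⋯
    refine CAaux.final c12 c13 c23 1 (ℓ := fun t => ((t : ℕ) : Fin 3)) ?_ ?_ hc
      (Or.inl rfl) ?_ w ?_ p
    · intro n
      exact hcast3 n
    · have key : ∀ x : Fin 3, x ≠ x + 1 ∧ x ≠ x + 2 ∧ x + 1 ≠ x + 2 := by decide
      intro n
      refine ⟨?_, ?_, ?_⟩
      · show ((n : ℕ) : Fin 3) ≠ ((n + 1 : ℕ) : Fin 3)
        push_cast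
        exact (key _).1
      · show ((n : ℕ) : Fin 3) ≠ ((n + 2 : ℕ) : Fin 3)
        push_cast
        exact (key _).2.1
      · show ((n + 1 : ℕ) : Fin 3) ≠ ((n + 2 : ℕ) : Fin 3)
        push_cast
        exact (key _).2.2
    · refine ⟨?_, ?_, ?_, ?_⟩
      · intro pp qq
        fin_cases pp <;> fin_cases qq <;>
          simp [B0, Matrix.cons_val_zero, Matrix.cons_val_one, Matrix.head_cons]
      · show 1 * B0 c12 c13 c23 ((0:ℕ) : Fin 3) ((0+1:ℕ) : Fin 3)
          = cOf c12 c13 c23 ((0:ℕ) : Fin 3) ((0+1:ℕ) : Fin 3)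
        rw [show ((0:ℕ) : Fin 3) = 0 from rfl, show ((0+1:ℕ) : Fin 3) = 1 from rfl]
        simp [B0, cOf, Matrix.cons_val_zero, Matrix.cons_val_one, Matrix.head_cons]
      · show 1 * B0 c12 c13 c23 ((0:ℕ) : Fin 3) ((0+2:ℕ) : Fin 3)
          = cOf c12 c13 c23 ((0:ℕ) : Fin 3) ((0+2:ℕ) : Fin 3)
        rw [show ((0:ℕ) : Fin 3) = 0 from rfl, show ((0+2:ℕ) : Fin 3) = 2 from rfl]
        simp [B0, cOf, Matrix.cons_val_zero, Matrix.cons_val_one, Matrix.head_cons]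
      · show 1 * B0 c12 c13 c23 ((0+1:ℕ) : Fin 3) ((0+2:ℕ) : Fin 3)
          = cOf c12 c13 c23 ((0+1:ℕ) : Fin 3) ((0+2:ℕ) : Fin 3)
        rw [show ((0+1:ℕ) : Fin 3) = 1 from rfl, show ((0+2:ℕ) : Fin 3) = 2 from rfl]
        simp [B0, cOf, Matrix.cons_val_zero, Matrix.cons_val_one, Matrix.head_cons]
    · exact CAaux.list_eq_wl w _ hA
  · -- prefix of 321321⋯
    refine CAaux.final c12 c13 c23 (-1) (ℓ := fun t => -(((t : ℕ) : Fin 3) + 1)) ?_ ?_ hc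
      (Or.inr rfl) ?_ w ?_ p
    · intro n
      show -(((n + 3 : ℕ) : Fin 3) + 1) = -(((n : ℕ) : Fin 3) + 1)
      rw [hcast3 n]
    · have key : ∀ x : Fin 3, -(x + 1) ≠ -(x + 1 + 1) ∧ -(x + 1) ≠ -(x + 2 + 1) ∧
          -(x + 1 + 1) ≠ -(x + 2 + 1) := by decide
      intro n
      refine ⟨?_, ?_, ?_⟩
      · show -(((n : ℕ) : Fin 3) + 1) ≠ -(((n + 1 : ℕ) : Fin 3) + 1)
        push_cast
        exact (key _).1
      · show -(((n : ℕ) : Fin 3) + 1) ≠ -(((n + 2 : ℕ) : Fin 3) + 1)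
        push_cast
        exact (key _).2.1
      · show -(((n + 1 : ℕ) : Fin 3) + 1) ≠ -(((n + 2 : ℕ) : Fin 3) + 1)
        push_cast
        exact (key _).2.2
    · refine ⟨?_, ?_, ?_, ?_⟩
      · intro pp qq
        fin_cases pp <;> fin_cases qq <;>
          simp [B0, Matrix.cons_val_zero, Matrix.cons_val_one, Matrix.head_cons]
      · show -1 * B0 c12 c13 c23 (-(((0:ℕ) : Fin 3) + 1)) (-(((0+1:ℕ) : Fin 3) + 1))
          = cOf c12 c13 c23 (-(((0:ℕ) : Fin 3) + 1)) (-(((0+1:ℕ) : Fin 3) + 1))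
        rw [show -(((0:ℕ) : Fin 3) + 1) = 2 from rfl, show -(((0+1:ℕ) : Fin 3) + 1) = 1 from rfl]
        simp [B0, cOf, Matrix.cons_val_zero, Matrix.cons_val_one, Matrix.head_cons]
      · show -1 * B0 c12 c13 c23 (-(((0:ℕ) : Fin 3) + 1)) (-(((0+2:ℕ) : Fin 3) + 1))
          = cOf c12 c13 c23 (-(((0:ℕ) : Fin 3) + 1)) (-(((0+2:ℕ) : Fin 3) + 1))
        rw [show -(((0:ℕ) : Fin 3) + 1) = 2 from rfl, show -(((0+2:ℕ) : Fin 3) + 1) = 0 from rfl]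
        simp [B0, cOf, Matrix.cons_val_zero, Matrix.cons_val_one, Matrix.head_cons]
      · show -1 * B0 c12 c13 c23 (-(((0+1:ℕ) : Fin 3) + 1)) (-(((0+2:ℕ) : Fin 3) + 1))
          = cOf c12 c13 c23 (-(((0+1:ℕ) : Fin 3) + 1)) (-(((0+2:ℕ) : Fin 3) + 1))
        rw [show -(((0+1:ℕ) : Fin 3) + 1) = 1 from rfl, show -(((0+2:ℕ) : Fin 3) + 1) = 0 from rfl]
        simp [B0, cOf, Matrix.cons_val_zero, Matrix.cons_val_one, Matrix.head_cons]
    · exact CAaux.list_eq_wl w _ hA)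

end
end

section
/- Let j, k ∈ {1,2,3} with j ≠ k, and let 𝔲 be a nonempty word whose last letter is j and such that, if 𝔲 has length at least 2, its second-to-last letter is not k. Then s_𝔲(α_j) + s_𝔲(α_k) ≥ 0 componentwise. -/
open MvPolynomial

noncomputable section

section AuxStmt14
variable (c12 c13 c23 : ℤ)

lemma bform_alpha (p q : Fin 3) :
    bform c12 c13 c23 (alpha p) (alpha q) = cart c12 c13 c23 p q := by
  simp [bform, alpha, Fin.sum_univ_three, Pi.single_apply]

lemma cart_le_neg_two (h12 : 2 ≤ c12) (h13 : 2 ≤ c13) (h23 : 2 ≤ c23)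
    (p q : Fin 3) (h : p ≠ q) : cart c12 c13 c23 p q ≤ -2 := by
  fin_cases p <;> fin_cases q <;> simp_all [cart] <;> omega

lemma bform_add_left (v w u : Vec3) :
    bform c12 c13 c23 (v + w) u = bform c12 c13 c23 v u + bform c12 c13 c23 w u := by
  simp [bform, add_mul, Finset.sum_add_distrib]

lemma bform_smul_left (z : ℤ) (v u : Vec3) :
    bform c12 c13 c23 (z • v) u = z * bform c12 c13 c23 v u := by
  simp [bform, Finset.mul_sum, mul_assoc]

lemma bform_neg_left (v u : Vec3) : bform c12 c13 c23 (-v) u = - bform c12 c13 c23 v u := by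
  simp [bform, Finset.sum_neg_distrib]

lemma srefl_add (p : Fin 3) (v w : Vec3) :
    srefl c12 c13 c23 p (v + w) = srefl c12 c13 c23 p v + srefl c12 c13 c23 p w := by
  simp only [srefl, bform_add_left, add_smul]; abel

lemma srefl_smul (p : Fin 3) (z : ℤ) (v : Vec3) :
    srefl c12 c13 c23 p (z • v) = z • srefl c12 c13 c23 p v := by
  simp only [srefl, bform_smul_left, mul_smul, smul_sub]

lemma srefl_neg (p : Fin 3) (v : Vec3) :
    srefl c12 c13 c23 p (-v) = - srefl c12 c13 c23 p v := by
  simp only [srefl, bform_neg_left, neg_smul]; abel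

lemma sWord_cons (a : Fin 3) (w : List (Fin 3)) (v : Vec3) :
    sWord c12 c13 c23 (a :: w) v = srefl c12 c13 c23 a (sWord c12 c13 c23 w v) := rfl

lemma sWord_add (w : List (Fin 3)) (v u : Vec3) :
    sWord c12 c13 c23 w (v + u) = sWord c12 c13 c23 w v + sWord c12 c13 c23 w u := by
  induction w with
  | nil => rfl
  | cons a w ih => simp [sWord_cons, ih, srefl_add]

lemma sWord_smul (w : List (Fin 3)) (z : ℤ) (v : Vec3) :
    sWord c12 c13 c23 w (z • v) = z • sWord c12 c13 c23 w v := by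
  induction w with
  | nil => rfl
  | cons a w ih => simp only [sWord_cons, ih, srefl_smul]

lemma sWord_neg (w : List (Fin 3)) (v : Vec3) :
    sWord c12 c13 c23 w (-v) = - sWord c12 c13 c23 w v := by
  induction w with
  | nil => rfl
  | cons a w ih => simp [sWord_cons, ih, srefl_neg]

lemma sWord_append_singleton (w : List (Fin 3)) (m : Fin 3) (v : Vec3) :
    sWord c12 c13 c23 (w ++ [m]) v = sWord c12 c13 c23 w (srefl c12 c13 c23 m v) := by
  simp [sWord, List.foldr_append]

lemma srefl_alpha_self (p : Fin 3) : srefl c12 c13 c23 p (alpha p) = - alpha p := by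
  rw [srefl, bform_alpha]
  have : cart c12 c13 c23 p p = 2 := by simp [cart]
  rw [this]; module

lemma srefl_alpha_ne (p m : Fin 3) (h : p ≠ m) :
    srefl c12 c13 c23 m (alpha p) =
      alpha p + (-(cart c12 c13 c23 p m)) • alpha m := by
  rw [srefl, bform_alpha]; module

lemma alpha_nonneg (p : Fin 3) : (0 : Vec3) ≤ alpha p := by
  intro i; simp only [alpha, Pi.single_apply, Pi.zero_apply]
  split <;> norm_num

end AuxStmt14

section Main
variable (c12 c13 c23 : ℤ)

lemma key_inv (h12 : 2 ≤ c12) (h13 : 2 ≤ c13) (h23 : 2 ≤ c23) :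
    ∀ (u : List (Fin 3)) (hne : u ≠ []), u.Chain' (· ≠ ·) →
    (∀ p, p ≠ u.getLast hne → 0 ≤ sWord c12 c13 c23 u (alpha p)) ∧
    sWord c12 c13 c23 u (alpha (u.getLast hne)) ≤ 0 ∧
    (∀ p, p ≠ u.getLast hne →
      0 ≤ sWord c12 c13 c23 u (alpha p) + sWord c12 c13 c23 u (alpha (u.getLast hne))) := by
  intro u
  induction u using List.reverseRecOn with
  | nil => intro hne; exact absurd rfl hne
  | append_singleton w m ih =>
    intro hne hch
    have hlast : (w ++ [m]).getLast hne = m := by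
      simp [List.getLast_append]
    rw [hlast]
    have hformm : sWord c12 c13 c23 (w ++ [m]) (alpha m) = - sWord c12 c13 c23 w (alpha m) := by
      rw [sWord_append_singleton, srefl_alpha_self, sWord_neg]
    have hform : ∀ p, p ≠ m → sWord c12 c13 c23 (w ++ [m]) (alpha p) =
        sWord c12 c13 c23 w (alpha p)
          + (-(cart c12 c13 c23 p m)) • sWord c12 c13 c23 w (alpha m) := by
      intro p hp
      rw [sWord_append_singleton, srefl_alpha_ne _ _ _ p m hp, sWord_add, sWord_smul]
    rcases eq_or_ne w [] with rfl | hw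
    · refine ⟨?_, ?_, ?_⟩
      · intro p hp
        rw [hform p hp, Pi.le_def]; intro i
        have h1 := Pi.le_def.mp (alpha_nonneg p) i
        have h2 := Pi.le_def.mp (alpha_nonneg m) i
        have hc := cart_le_neg_two c12 c13 c23 h12 h13 h23 p m hp
        simp only [sWord, List.foldr_nil, Pi.add_apply, Pi.smul_apply, smul_eq_mul,
          Pi.zero_apply] at *
        nlinarith
      · rw [hformm]
        simpa [sWord] using neg_nonpos.mpr (alpha_nonneg m)
      · intro p hp
        rw [hform p hp, hformm, Pi.le_def]; intro i
        have h1 := Pi.le_def.mp (alpha_nonneg p) i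
        have h2 := Pi.le_def.mp (alpha_nonneg m) i
        have hc := cart_le_neg_two c12 c13 c23 h12 h13 h23 p m hp
        simp only [sWord, List.foldr_nil, Pi.add_apply, Pi.smul_apply, smul_eq_mul,
          Pi.neg_apply, Pi.zero_apply] at *
        nlinarith
    · obtain ⟨hchw, -, hsep⟩ := List.isChain_append.mp hch
      have hlw : w.getLast? = some (w.getLast hw) := List.getLast?_eq_getLast hw
      have hlm : w.getLast hw ≠ m := hsep _ hlw m rfl
      obtain ⟨haP, haL, hbP⟩ := ih hw hchw
      set l := w.getLast hw with hl
      have hAm : (0 : Vec3) ≤ sWord c12 c13 c23 w (alpha m) := haP m hlm.symm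
      refine ⟨?_, ?_, ?_⟩
      · intro p hp
        rw [hform p hp, Pi.le_def]; intro i
        have h2 := Pi.le_def.mp hAm i
        have hc := cart_le_neg_two c12 c13 c23 h12 h13 h23 p m hp
        rcases eq_or_ne p l with rfl | hpl
        · have h3 := Pi.le_def.mp haL i
          have h4 := Pi.le_def.mp (hbP m hlm.symm) i
          simp only [Pi.add_apply, Pi.smul_apply, smul_eq_mul, Pi.zero_apply] at *
          nlinarith
        · have h1 := Pi.le_def.mp (haP p hpl) i
          simp only [Pi.add_apply, Pi.smul_apply, smul_eq_mul, Pi.zero_apply] at *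
          nlinarith
      · rw [hformm]
        simpa using neg_nonpos.mpr hAm
      · intro p hp
        rw [hform p hp, hformm, Pi.le_def]; intro i
        have h2 := Pi.le_def.mp hAm i
        have hc := cart_le_neg_two c12 c13 c23 h12 h13 h23 p m hp
        rcases eq_or_ne p l with rfl | hpl
        · have h3 := Pi.le_def.mp haL i
          have h4 := Pi.le_def.mp (hbP m hlm.symm) i
          simp only [Pi.add_apply, Pi.smul_apply, smul_eq_mul, Pi.neg_apply,
            Pi.zero_apply] at *
          nlinarith
        · have h1 := Pi.le_def.mp (haP p hpl) i
          simp only [Pi.add_apply, Pi.smul_apply, smul_eq_mul, Pi.neg_apply,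
            Pi.zero_apply] at *
          nlinarith

end Main

theorem stmt14 (c12 c13 c23 : ℤ) (h12 : 2 ≤ c12) (h13 : 2 ≤ c13) (h23 : 2 ≤ c23)
    (j k : Fin 3) (hjk : j ≠ k)
    (u : List (Fin 3)) (hu : u.Chain' (· ≠ ·)) (hne : u ≠ [])
    (hlast : u.getLast hne = j)
    (h2nd : 2 ≤ u.length → u.getD (u.length - 2) 0 ≠ k) :
    0 ≤ sWord c12 c13 c23 u (alpha j) + sWord c12 c13 c23 u (alpha k) := by
  obtain ⟨-, -, hb⟩ := key_inv c12 c13 c23 h12 h13 h23 u hne hu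
  rw [hlast] at hb
  simpa [add_comm] using hb k (Ne.symm hjk)

end
end

section
/- For every word 𝔴, the mutated exchange matrix B(𝔴) is acyclic — meaning it is NOT the case that the three integers b_12(𝔴), b_23(𝔴), -b_13(𝔴) are all positive, and NOT the case that they are all negative — if and only if 𝔴 is the empty word, a prefix of the infinite periodic word 123123⋯, or a prefix of 321321⋯. -/
open MvPolynomial

noncomputable section

abbrev T3 := ℤ × ℤ × ℤ

def stepT (t : T3) (k : Fin 3) : T3 :=
  if k = 0 then (-t.1, -t.2.1, t.2.2 + (-t.1).sign * max ((-t.1) * t.2.1) 0)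
  else if k = 1 then (-t.1, t.2.1 + (t.1).sign * max (t.1 * t.2.2) 0, -t.2.2)
  else (t.1 + (t.2.1).sign * max (t.2.1 * (-t.2.2)) 0, -t.2.1, -t.2.2)

def MtT (t : T3) : Matrix (Fin 3) (Fin 3) ℤ :=
  !![0, t.1, t.2.1; -t.1, 0, t.2.2; -t.2.1, -t.2.2, 0]

lemma sm_skew' (x y : ℤ) : -(y.sign * max (-(y*x)) 0) = x.sign * max (-(x*y)) 0 := by
  rcases le_or_gt 0 (x*y) with h|h
  · rw [max_eq_right (by nlinarith : -(y*x) ≤ 0), max_eq_right (by linarith : -(x*y) ≤ 0)]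
    ring
  · rw [mul_comm y x]
    rcases lt_trichotomy x 0 with hx|rfl|hx
    · have hy : 0 < y := by nlinarith
      rw [Int.sign_eq_neg_one_iff_neg.mpr hx, Int.sign_eq_one_iff_pos.mpr hy]; ring
    · simp at h
    · have hy : y < 0 := by nlinarith
      rw [Int.sign_eq_one_iff_pos.mpr hx, Int.sign_eq_neg_one_iff_neg.mpr hy]; ring


lemma sm_comm (s t : ℤ) : t.sign * max (s*t) 0 = s.sign * max (s*t) 0 := by
  rcases le_or_gt (s*t) 0 with h|h
  · rw [max_eq_right h, mul_zero, mul_zero]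
  · rw [max_eq_left h.le]
    rcases lt_trichotomy s 0 with hs|rfl|hs
    · have ht : t < 0 := by nlinarith
      rw [Int.sign_eq_neg_one_iff_neg.mpr hs, Int.sign_eq_neg_one_iff_neg.mpr ht]
    · simp at h
    · have ht : 0 < t := by nlinarith
      rw [Int.sign_eq_one_iff_pos.mpr hs, Int.sign_eq_one_iff_pos.mpr ht]

lemma sm_comm' (x z : ℤ) : z.sign * max (z*x) 0 = x.sign * max (x*z) 0 := by
  rw [mul_comm z x]; exact sm_comm x z

section
variable (x y z : ℤ)

lemma mm0 :
    (Matrix.of fun p q =>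
      if p = (0:Fin 3) ∨ q = 0 then - (MtT (x,y,z)) p q
      else (MtT (x,y,z)) p q + ((MtT (x,y,z)) p 0).sign * max ((MtT (x,y,z)) p 0 * (MtT (x,y,z)) 0 q) 0)
    = MtT (stepT (x,y,z) 0) := by
  rw [show stepT (x,y,z) 0 = (-x, -y, z + (-x).sign * max ((-x) * y) 0) from rfl]
  ext p q
  fin_cases p <;> fin_cases q <;> simp only [Matrix.of_apply, MtT] <;> norm_num [Fin.ext_iff] <;>
    first
      | rfl
      | exact Or.inr (mul_self_nonneg _)
      | linarith [sm_skew' x y, sm_skew' y x, sm_skew' x z, sm_skew' z x,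
          sm_skew' y z, sm_skew' z y, sm_comm' x y, sm_comm' x z, sm_comm' y z]

lemma mm1 :
    (Matrix.of fun p q =>
      if p = (1:Fin 3) ∨ q = 1 then - (MtT (x,y,z)) p q
      else (MtT (x,y,z)) p q + ((MtT (x,y,z)) p 1).sign * max ((MtT (x,y,z)) p 1 * (MtT (x,y,z)) 1 q) 0)
    = MtT (stepT (x,y,z) 1) := by
  rw [show stepT (x,y,z) 1 = (-x, y + (x).sign * max (x * z) 0, -z) from rfl]
  ext p q
  fin_cases p <;> fin_cases q <;> simp only [Matrix.of_apply, MtT] <;> norm_num [Fin.ext_iff] <;>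
    first
      | rfl
      | exact Or.inr (mul_self_nonneg _)
      | linarith [sm_skew' x y, sm_skew' y x, sm_skew' x z, sm_skew' z x,
          sm_skew' y z, sm_skew' z y, sm_comm' x y, sm_comm' x z, sm_comm' y z, sm_skew' (-x) z, sm_skew' z (-x), sm_skew' (-x) y]

lemma mm2 :
    (Matrix.of fun p q =>
      if p = (2:Fin 3) ∨ q = 2 then - (MtT (x,y,z)) p q
      else (MtT (x,y,z)) p q + ((MtT (x,y,z)) p 2).sign * max ((MtT (x,y,z)) p 2 * (MtT (x,y,z)) 2 q) 0)
    = MtT (stepT (x,y,z) 2) := by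
  rw [show stepT (x,y,z) 2 = (x + (y).sign * max (y * (-z)) 0, -y, -z) from rfl]
  ext p q
  fin_cases p <;> fin_cases q <;> simp only [Matrix.of_apply, MtT] <;> norm_num [Fin.ext_iff, Matrix.cons_val_two, Matrix.tail_cons, Matrix.head_cons] <;>
    first
      | rfl
      | exact Or.inr (mul_self_nonneg _)
      | linarith [sm_skew' x y, sm_skew' y x, sm_skew' x z, sm_skew' z x,
          sm_skew' y z, sm_skew' z y, sm_comm' x y, sm_comm' x z, sm_comm' y z, sm_skew' (-y) z, sm_skew' z (-y)]
end

lemma sm_pp {s t : ℤ} (hs : 0 < s) (ht : 0 < t) : s.sign * max (s*t) 0 = s*t := by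
  rw [Int.sign_eq_one_iff_pos.mpr hs, one_mul, max_eq_left (by positivity)]
lemma sm_nn {s t : ℤ} (hs : s < 0) (ht : t < 0) : s.sign * max (s*t) 0 = -(s*t) := by
  rw [Int.sign_eq_neg_one_iff_neg.mpr hs, neg_one_mul,
    max_eq_left (le_of_lt (mul_pos_of_neg_of_neg hs ht))]
lemma sm_np {s t : ℤ} (h : s * t ≤ 0) : s.sign * max (s*t) 0 = 0 := by
  rw [max_eq_right h, mul_zero]

def cycT (t : T3) : Prop :=
  (0 < t.1 ∧ t.2.1 < 0 ∧ 0 < t.2.2) ∨ (t.1 < 0 ∧ 0 < t.2.1 ∧ t.2.2 < 0)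

def PhiT (k : Fin 3) (t : T3) : Prop :=
  cycT t ∧ 2 ≤ |t.1| ∧ 2 ≤ |t.2.1| ∧ 2 ≤ |t.2.2| ∧
  ((k = 0 ∧ |t.1| < |t.2.2| ∧ |t.2.1| < |t.2.2|) ∨
   (k = 1 ∧ |t.1| < |t.2.1| ∧ |t.2.2| < |t.2.1|) ∨
   (k = 2 ∧ |t.2.1| < |t.1| ∧ |t.2.2| < |t.1|))

lemma stepT_neg0 (x y z : ℤ) : stepT ((-x, -y, -z) : T3) 0 =
    ((-(stepT ((x,y,z) : T3) 0).1, -(stepT ((x,y,z):T3) 0).2.1, -(stepT ((x,y,z):T3) 0).2.2) : T3) := by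
  simp only [stepT]
  norm_num [Prod.ext_iff]
  ring

lemma stepT_neg1 (x y z : ℤ) : stepT ((-x, -y, -z) : T3) 1 =
    ((-(stepT ((x,y,z) : T3) 1).1, -(stepT ((x,y,z):T3) 1).2.1, -(stepT ((x,y,z):T3) 1).2.2) : T3) := by
  simp only [stepT]
  norm_num [Prod.ext_iff]
  ring

lemma stepT_neg2 (x y z : ℤ) : stepT ((-x, -y, -z) : T3) 2 =
    ((-(stepT ((x,y,z) : T3) 2).1, -(stepT ((x,y,z):T3) 2).2.1, -(stepT ((x,y,z):T3) 2).2.2) : T3) := by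
  simp only [stepT]
  norm_num [Prod.ext_iff, (by decide : ¬((2:Fin 3) = 0)), (by decide : ¬((2:Fin 3) = 1))]
  ring

lemma stepT_neg (t : T3) (k : Fin 3) :
    stepT (-t.1, -t.2.1, -t.2.2) k =
      ((-(stepT t k).1, -(stepT t k).2.1, -(stepT t k).2.2) : T3) := by
  obtain ⟨x, y, z⟩ := t
  fin_cases k
  · exact stepT_neg0 x y z
  · exact stepT_neg1 x y z
  · exact stepT_neg2 x y z

lemma PhiT_neg {k : Fin 3} {t : T3} (h : PhiT k t) :
    PhiT k (-t.1, -t.2.1, -t.2.2) := by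
  obtain ⟨hc, h1, h2, h3, hk⟩ := h
  refine ⟨?_, ?_, ?_, ?_, ?_⟩ <;>
    simp only [cycT, abs_neg] at * <;>
    first
      | assumption
      | (rcases hc with ⟨a,b,c⟩|⟨a,b,c⟩
         · exact Or.inr ⟨by linarith, by linarith, by linarith⟩
         · exact Or.inl ⟨by linarith, by linarith, by linarith⟩)

lemma phi_step_I {j k : Fin 3} (hne : j ≠ k) {x y z : ℤ}
    (hx : 0 < x) (hy : y < 0) (hz : 0 < z)
    (h : PhiT k ((x,y,z) : T3)) : PhiT j (stepT ((x,y,z) : T3) j) := by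
  obtain ⟨-, h1, h2, h3, hk⟩ := h
  simp only at h1 h2 h3 hk
  rw [abs_of_pos hx] at h1 hk
  rw [abs_of_neg hy] at h2 hk
  rw [abs_of_pos hz] at h3 hk
  fin_cases j
  · -- j = 0
    replace hne : (0 : Fin 3) ≠ k := hne
    show PhiT 0 (stepT ((x,y,z) : T3) 0)
    have e : stepT ((x,y,z) : T3) 0 = ((-x, -y, z + x*y) : T3) := by
      rw [show stepT ((x,y,z) : T3) 0 = (-x, -y, z + (-x).sign * max ((-x)*y) 0) from rfl,
        sm_nn (by linarith : -x < 0) hy]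
      norm_num [Prod.ext_iff]
      try ring
    rw [e]
    rcases hk with ⟨hk0, hA, hB⟩|⟨hk1, hA, hB⟩|⟨hk2, hA, hB⟩
    · subst hk0; exact absurd rfl hne
    · have key : 2*(-y) ≤ x*(-y) := by nlinarith
      have hz' : z + x*y < 0 := by nlinarith
      refine ⟨Or.inr ⟨by simp only; linarith, by simp only; linarith, by simp only; exact hz'⟩,
        ?_, ?_, ?_, Or.inl ⟨rfl, ?_, ?_⟩⟩ <;> simp only
      · rw [abs_of_neg (by linarith : -x < 0)]; linarith
      · rw [abs_of_pos (by linarith : (0:ℤ) < -y)]; linarith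
      · rw [abs_of_neg hz']; nlinarith
      · rw [abs_of_neg (by linarith : -x < 0), abs_of_neg hz']; nlinarith
      · rw [abs_of_pos (by linarith : (0:ℤ) < -y), abs_of_neg hz']; nlinarith
    · have key : x*2 ≤ x*(-y) := by nlinarith
      have hz' : z + x*y < 0 := by nlinarith
      refine ⟨Or.inr ⟨by simp only; linarith, by simp only; linarith, by simp only; exact hz'⟩,
        ?_, ?_, ?_, Or.inl ⟨rfl, ?_, ?_⟩⟩ <;> simp only
      · rw [abs_of_neg (by linarith : -x < 0)]; linarith
      · rw [abs_of_pos (by linarith : (0:ℤ) < -y)]; linarith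
      · rw [abs_of_neg hz']; nlinarith
      · rw [abs_of_neg (by linarith : -x < 0), abs_of_neg hz']; nlinarith
      · rw [abs_of_pos (by linarith : (0:ℤ) < -y), abs_of_neg hz']; nlinarith
  · -- j = 1
    replace hne : (1 : Fin 3) ≠ k := hne
    show PhiT 1 (stepT ((x,y,z) : T3) 1)
    have e : stepT ((x,y,z) : T3) 1 = ((-x, y + x*z, -z) : T3) := by
      rw [show stepT ((x,y,z) : T3) 1 = (-x, y + x.sign * max (x*z) 0, -z) from rfl,
        sm_pp hx hz]
    rw [e]
    rcases hk with ⟨hk0, hA, hB⟩|⟨hk1, hA, hB⟩|⟨hk2, hA, hB⟩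
    · have key : 2*z ≤ x*z := by nlinarith
      have hy' : 0 < y + x*z := by nlinarith
      refine ⟨Or.inr ⟨by simp only; linarith, by simp only; exact hy', by simp only; linarith⟩,
        ?_, ?_, ?_, Or.inr (Or.inl ⟨rfl, ?_, ?_⟩)⟩ <;> simp only
      · rw [abs_of_neg (by linarith : -x < 0)]; linarith
      · rw [abs_of_pos hy']; nlinarith
      · rw [abs_of_neg (by linarith : -z < 0)]; linarith
      · rw [abs_of_neg (by linarith : -x < 0), abs_of_pos hy']; nlinarith
      · rw [abs_of_neg (by linarith : -z < 0), abs_of_pos hy']; nlinarith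
    · subst hk1; exact absurd rfl hne
    · have key : x*2 ≤ x*z := by nlinarith
      have hy' : 0 < y + x*z := by nlinarith
      refine ⟨Or.inr ⟨by simp only; linarith, by simp only; exact hy', by simp only; linarith⟩,
        ?_, ?_, ?_, Or.inr (Or.inl ⟨rfl, ?_, ?_⟩)⟩ <;> simp only
      · rw [abs_of_neg (by linarith : -x < 0)]; linarith
      · rw [abs_of_pos hy']; nlinarith
      · rw [abs_of_neg (by linarith : -z < 0)]; linarith
      · rw [abs_of_neg (by linarith : -x < 0), abs_of_pos hy']; nlinarith
      · rw [abs_of_neg (by linarith : -z < 0), abs_of_pos hy']; nlinarith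
  · -- j = 2
    replace hne : (2 : Fin 3) ≠ k := hne
    show PhiT 2 (stepT ((x,y,z) : T3) 2)
    have e : stepT ((x,y,z) : T3) 2 = ((x + y*z, -y, -z) : T3) := by
      rw [show stepT ((x,y,z) : T3) 2 = (x + y.sign * max (y*(-z)) 0, -y, -z) from rfl,
        sm_nn hy (by linarith : -z < 0)]
      norm_num [Prod.ext_iff]
      try ring
    rw [e]
    rcases hk with ⟨hk0, hA, hB⟩|⟨hk1, hA, hB⟩|⟨hk2, hA, hB⟩
    · have key : 2*z ≤ (-y)*z := by nlinarith
      have hx' : x + y*z < 0 := by nlinarith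
      refine ⟨Or.inr ⟨by simp only; exact hx', by simp only; linarith, by simp only; linarith⟩,
        ?_, ?_, ?_, Or.inr (Or.inr ⟨rfl, ?_, ?_⟩)⟩ <;> simp only
      · rw [abs_of_neg hx']; nlinarith
      · rw [abs_of_pos (by linarith : (0:ℤ) < -y)]; linarith
      · rw [abs_of_neg (by linarith : -z < 0)]; linarith
      · rw [abs_of_pos (by linarith : (0:ℤ) < -y), abs_of_neg hx']; nlinarith
      · rw [abs_of_neg (by linarith : -z < 0), abs_of_neg hx']; nlinarith
    · have key : (-y)*2 ≤ (-y)*z := by nlinarith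
      have hx' : x + y*z < 0 := by nlinarith
      refine ⟨Or.inr ⟨by simp only; exact hx', by simp only; linarith, by simp only; linarith⟩,
        ?_, ?_, ?_, Or.inr (Or.inr ⟨rfl, ?_, ?_⟩)⟩ <;> simp only
      · rw [abs_of_neg hx']; nlinarith
      · rw [abs_of_pos (by linarith : (0:ℤ) < -y)]; linarith
      · rw [abs_of_neg (by linarith : -z < 0)]; linarith
      · rw [abs_of_pos (by linarith : (0:ℤ) < -y), abs_of_neg hx']; nlinarith
      · rw [abs_of_neg (by linarith : -z < 0), abs_of_neg hx']; nlinarith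
    · subst hk2; exact absurd rfl hne

lemma phi_step {j k : Fin 3} (hne : j ≠ k) {t : T3} (h : PhiT k t) :
    PhiT j (stepT t j) := by
  obtain ⟨x,y,z⟩ := t
  rcases h.1 with ⟨hx,hy,hz⟩|⟨hx,hy,hz⟩
  · exact phi_step_I hne hx hy hz h
  · try simp only at hx hy hz
    have h2 := phi_step_I hne (by linarith : (0:ℤ) < -x)
      (by linarith : -y < 0) (by linarith : (0:ℤ) < -z) (PhiT_neg h)
    rw [show ((-x,-y,-z) : T3) = (-((x,y,z):T3).1, -((x,y,z):T3).2.1, -((x,y,z):T3).2.2) from rfl,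
      stepT_neg ((x,y,z) : T3) j] at h2
    have h3 := PhiT_neg h2
    simpa only [neg_neg, Prod.mk.eta] using h3

section states
variable {a b c : ℤ}

lemma g1 (ha : 0 < a) (hb : 0 < b) : stepT ((a,b,c) : T3) 0 = ((-a,-b,c) : T3) := by
  rw [show stepT ((a,b,c) : T3) 0 = (-a, -b, c + (-a).sign * max ((-a)*b) 0) from rfl,
    sm_np (by nlinarith : (-a)*b ≤ 0)]
  norm_num

lemma g2 (ha : 0 < a) (hc : 0 < c) : stepT ((-a,-b,c) : T3) 1 = ((a,-b,-c) : T3) := by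
  rw [show stepT ((-a,-b,c) : T3) 1 = (-(-a), -b + (-a).sign * max ((-a)*c) 0, -c) from rfl,
    sm_np (by nlinarith : (-a)*c ≤ 0)]
  norm_num

lemma g3 (hb : 0 < b) (hc : 0 < c) : stepT ((a,-b,-c) : T3) 2 = ((a,b,c) : T3) := by
  rw [show stepT ((a,-b,-c) : T3) 2 = (a + (-b).sign * max ((-b) * -(-c)) 0, -(-b), -(-c)) from rfl,
    sm_np (by nlinarith : (-b) * -(-c) ≤ 0)]
  norm_num

lemma g4 (hb : 0 < b) (hc : 0 < c) : stepT ((a,b,c) : T3) 2 = ((a,-b,-c) : T3) := by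
  rw [show stepT ((a,b,c) : T3) 2 = (a + b.sign * max (b * (-c)) 0, -b, -c) from rfl,
    sm_np (by nlinarith : b * (-c) ≤ 0)]
  norm_num

lemma g5 (ha : 0 < a) (hc : 0 < c) : stepT ((a,-b,-c) : T3) 1 = ((-a,-b,c) : T3) := by
  rw [show stepT ((a,-b,-c) : T3) 1 = (-a, -b + a.sign * max (a * (-c)) 0, -(-c)) from rfl,
    sm_np (by nlinarith : a * (-c) ≤ 0)]
  norm_num

lemma g6 (ha : 0 < a) (hb : 0 < b) : stepT ((-a,-b,c) : T3) 0 = ((a,b,c) : T3) := by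
  rw [show stepT ((-a,-b,c) : T3) 0 = (-(-a), -(-b), c + (-(-a)).sign * max ((-(-a))*(-b)) 0) from rfl,
    sm_np (by nlinarith : (-(-a))*(-b) ≤ 0)]
  norm_num

lemma e1 (ha : 2 ≤ a) (hb : 2 ≤ b) (hc : 2 ≤ c) : PhiT 1 (stepT ((a,b,c) : T3) 1) := by
  rw [show stepT ((a,b,c) : T3) 1 = (-a, b + a.sign * max (a*c) 0, -c) from rfl,
    sm_pp (by linarith) (by linarith)]
  have h1 : 0 < b + a*c := by nlinarith
  refine ⟨Or.inr ⟨by simp only; linarith, by simp only; exact h1, by simp only; linarith⟩,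
    ?_, ?_, ?_, Or.inr (Or.inl ⟨rfl, ?_, ?_⟩)⟩ <;> simp only
  · rw [abs_of_neg (by linarith : -a < 0)]; linarith
  · rw [abs_of_pos h1]; nlinarith
  · rw [abs_of_neg (by linarith : -c < 0)]; linarith
  · rw [abs_of_neg (by linarith : -a < 0), abs_of_pos h1]; nlinarith
  · rw [abs_of_neg (by linarith : -c < 0), abs_of_pos h1]; nlinarith

lemma e2 (ha : 2 ≤ a) (hb : 2 ≤ b) (hc : 2 ≤ c) : PhiT 2 (stepT ((-a,-b,c) : T3) 2) := by
  have e : stepT ((-a,-b,c) : T3) 2 = ((-a - b*c, b, -c) : T3) := by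
    rw [show stepT ((-a,-b,c) : T3) 2 = (-a + (-b).sign * max ((-b)*(-c)) 0, -(-b), -c) from rfl,
      sm_nn (by linarith : -b < 0) (by linarith : -c < 0)]
    norm_num [Prod.ext_iff]
    ring
  rw [e]
  have h1 : -a - b*c < 0 := by nlinarith
  refine ⟨Or.inr ⟨by simp only; exact h1, by simp only; linarith, by simp only; linarith⟩,
    ?_, ?_, ?_, Or.inr (Or.inr ⟨rfl, ?_, ?_⟩)⟩ <;> simp only
  · rw [abs_of_neg h1]; nlinarith
  · rw [abs_of_pos (by linarith : (0:ℤ) < b)]; linarith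
  · rw [abs_of_neg (by linarith : -c < 0)]; linarith
  · rw [abs_of_pos (by linarith : (0:ℤ) < b), abs_of_neg h1]; nlinarith
  · rw [abs_of_neg (by linarith : -c < 0), abs_of_neg h1]; nlinarith

lemma e3 (ha : 2 ≤ a) (hb : 2 ≤ b) (hc : 2 ≤ c) : PhiT 0 (stepT ((a,-b,-c) : T3) 0) := by
  have e : stepT ((a,-b,-c) : T3) 0 = ((-a, b, -c - a*b) : T3) := by
    rw [show stepT ((a,-b,-c) : T3) 0 = (-a, -(-b), -c + (-a).sign * max ((-a)*(-b)) 0) from rfl,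
      sm_nn (by linarith : -a < 0) (by linarith : -b < 0)]
    norm_num [Prod.ext_iff]
    ring
  rw [e]
  have h1 : -c - a*b < 0 := by nlinarith
  refine ⟨Or.inr ⟨by simp only; linarith, by simp only; linarith, by simp only; exact h1⟩,
    ?_, ?_, ?_, Or.inl ⟨rfl, ?_, ?_⟩⟩ <;> simp only
  · rw [abs_of_neg (by linarith : -a < 0)]; linarith
  · rw [abs_of_pos (by linarith : (0:ℤ) < b)]; linarith
  · rw [abs_of_neg h1]; nlinarith
  · rw [abs_of_neg (by linarith : -a < 0), abs_of_neg h1]; nlinarith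
  · rw [abs_of_pos (by linarith : (0:ℤ) < b), abs_of_neg h1]; nlinarith

end states

open Fin.NatCast

def FwdA (w : List (Fin 3)) : Prop := ∀ t < w.length, w.getD t 0 = (t : Fin 3)
def BwdA (w : List (Fin 3)) : Prop := ∀ t < w.length, w.getD t 0 = -((t : Fin 3) + 1)

def stF (a b c : ℤ) (r : ℕ) : T3 :=
  if r % 3 = 0 then (a,b,c) else if r % 3 = 1 then (-a,-b,c) else (a,-b,-c)
def stB (a b c : ℤ) (r : ℕ) : T3 :=
  if r % 3 = 0 then (a,b,c) else if r % 3 = 1 then (a,-b,-c) else (-a,-b,c)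

lemma fin3cases (j : Fin 3) : j = 0 ∨ j = 1 ∨ j = 2 := by
  fin_cases j
  exacts [Or.inl rfl, Or.inr (Or.inl rfl), Or.inr (Or.inr rfl)]

lemma fc0 {n : ℕ} (h : n % 3 = 0) : (n : Fin 3) = 0 := by
  apply Fin.ext; rw [Fin.val_natCast]; simp [h]
lemma fc1 {n : ℕ} (h : n % 3 = 1) : (n : Fin 3) = 1 := by
  apply Fin.ext; rw [Fin.val_natCast]; simp [h]
lemma fc2 {n : ℕ} (h : n % 3 = 2) : (n : Fin 3) = 2 := by
  apply Fin.ext; rw [Fin.val_natCast]; simp [h]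

lemma FwdA_append {u : List (Fin 3)} {j : Fin 3} :
    FwdA (u ++ [j]) ↔ FwdA u ∧ j = (u.length : Fin 3) := by
  constructor
  · intro h
    refine ⟨fun t ht => ?_, ?_⟩
    · have := h t (by simp; omega)
      rwa [List.getD_append _ _ _ _ ht] at this
    · have := h u.length (by simp)
      rwa [List.getD_append_right _ _ _ _ le_rfl, Nat.sub_self] at this
  · rintro ⟨h, rfl⟩ t ht
    simp only [List.length_append, List.length_singleton] at ht
    rcases lt_or_eq_of_le (Nat.lt_succ_iff.mp ht) with h' | rfl
    · rw [List.getD_append _ _ _ _ h']; exact h t h'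
    · rw [List.getD_append_right _ _ _ _ le_rfl, Nat.sub_self]; rfl

lemma BwdA_append {u : List (Fin 3)} {j : Fin 3} :
    BwdA (u ++ [j]) ↔ BwdA u ∧ j = -((u.length : Fin 3) + 1) := by
  constructor
  · intro h
    refine ⟨fun t ht => ?_, ?_⟩
    · have := h t (by simp; omega)
      rwa [List.getD_append _ _ _ _ ht] at this
    · have := h u.length (by simp)
      rwa [List.getD_append_right _ _ _ _ le_rfl, Nat.sub_self] at this
  · rintro ⟨h, rfl⟩ t ht
    simp only [List.length_append, List.length_singleton] at ht
    rcases lt_or_eq_of_le (Nat.lt_succ_iff.mp ht) with h' | rfl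
    · rw [List.getD_append _ _ _ _ h']; exact h t h'
    · rw [List.getD_append_right _ _ _ _ le_rfl, Nat.sub_self]; rfl

lemma chain_ne {u : List (Fin 3)} {j : Fin 3}
    (hw : (u ++ [j]).Chain' (· ≠ ·)) (h : u ≠ []) : u.getLastD 0 ≠ j := by
  obtain ⟨-, -, h3⟩ := List.isChain_append.mp hw
  have hs : u.getLast? = some (u.getLast h) := List.getLast?_eq_getLast h
  have := h3 (u.getLast h) hs j rfl
  rwa [List.getLastD_eq_getLast?, hs]

lemma getLastD_eq {u : List (Fin 3)} (h : u ≠ []) :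
    u.getLastD 0 = u.getD (u.length - 1) 0 := by
  rw [List.getLastD_eq_getLast?, List.getLast?_eq_getElem?, List.getD_eq_getElem?_getD]

lemma invariant {a b c : ℤ} (ha : 2 ≤ a) (hb : 2 ≤ b) (hc : 2 ≤ c)
    (w : List (Fin 3)) (hw : w.Chain' (· ≠ ·)) :
    (FwdA w ∧ w.foldl stepT ((a,b,c) : T3) = stF a b c w.length) ∨
    (BwdA w ∧ w.foldl stepT ((a,b,c) : T3) = stB a b c w.length) ∨
    (¬ FwdA w ∧ ¬ BwdA w ∧ PhiT (w.getLastD 0) (w.foldl stepT ((a,b,c) : T3))) := by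
  induction w using List.reverseRecOn with
  | nil =>
    left
    exact ⟨fun t ht => absurd ht (by simp), by simp [stF]⟩
  | append_singleton u j ih =>
    have hcu : u.Chain' (· ≠ ·) := (List.isChain_append.mp hw).1
    have hfold : (u ++ [j]).foldl stepT ((a,b,c) : T3) = stepT (u.foldl stepT ((a,b,c) : T3)) j := by
      simp [List.foldl_append]
    have hlen : (u ++ [j]).length = u.length + 1 := by simp
    have hlastw : (u ++ [j]).getLastD 0 = j := by simp
    rcases eq_or_ne u [] with rfl | hne
    · -- u = []
      rcases fin3cases j with rfl | rfl | rfl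
      · left
        constructor
        · intro t ht
          have ht0 : t = 0 := by simp at ht; omega
          subst ht0
          rfl
        · rw [hfold, show ([] : List (Fin 3)).foldl stepT ((a,b,c) : T3) = ((a,b,c) : T3) from rfl,
            g1 (by linarith) (by linarith), hlen]
          try simp [stF]
      · right; right
        refine ⟨?_, ?_, ?_⟩
        · intro hFw
          have h := hFw 0 (by simp)
          revert h
          decide
        · intro hBw
          have h := hBw 0 (by simp)
          revert h
          decide
        · rw [hlastw, hfold]
          exact e1 ha hb hc
      · right; left
        constructor
        · intro t ht
          have ht0 : t = 0 := by simp at ht; omega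
          subst ht0
          decide
        · rw [hfold, show ([] : List (Fin 3)).foldl stepT ((a,b,c) : T3) = ((a,b,c) : T3) from rfl,
            g4 (by linarith) (by linarith), hlen]
          try simp [stB]
    · -- u ≠ []
      have hlp : 1 ≤ u.length := List.length_pos_iff.mpr hne
      have hnej : u.getLastD 0 ≠ j := chain_ne hw hne
      rcases ih hcu with ⟨hF, hT⟩ | ⟨hB, hT⟩ | ⟨hnF, hnB, hphi⟩
      · -- FwdA u
        have hlast : u.getLastD 0 = ((u.length - 1 : ℕ) : Fin 3) := by
          rw [getLastD_eq hne]; exact hF (u.length - 1) (by omega)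
        have h00 : u.getD 0 0 = 0 := by
          have h := hF 0 hlp
          rwa [Nat.cast_zero] at h
        have hnB' : ¬ BwdA (u ++ [j]) := by
          intro hBw
          have := hBw 0 (by simp)
          rw [List.getD_append _ _ _ _ hlp, h00] at this
          exact absurd this (by decide)
        rcases (show u.length % 3 = 0 ∨ u.length % 3 = 1 ∨ u.length % 3 = 2 by omega) with hr | hr | hr
        · have hT' : u.foldl stepT ((a,b,c) : T3) = ((a,b,c) : T3) := by rw [hT]; simp [stF, hr]
          have hlv : u.getLastD 0 = 2 := by rw [hlast]; exact fc2 (by omega)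
          rcases fin3cases j with rfl | rfl | rfl
          · left
            refine ⟨FwdA_append.mpr ⟨hF, (fc0 hr).symm⟩, ?_⟩
            rw [hfold, hT', g1 (by linarith) (by linarith), hlen]
            simp [stF, Nat.add_mod, hr]
          · right; right
            refine ⟨?_, hnB', ?_⟩
            · intro hFw
              have := (FwdA_append.mp hFw).2
              rw [fc0 hr] at this
              exact absurd this (by decide)
            · rw [hlastw, hfold, hT']
              exact e1 ha hb hc
          · exact absurd hlv hnej
        · have hT' : u.foldl stepT ((a,b,c) : T3) = ((-a,-b,c) : T3) := by rw [hT]; simp [stF, hr]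
          have hlv : u.getLastD 0 = 0 := by rw [hlast]; exact fc0 (by omega)
          rcases fin3cases j with rfl | rfl | rfl
          · exact absurd hlv hnej
          · left
            refine ⟨FwdA_append.mpr ⟨hF, (fc1 hr).symm⟩, ?_⟩
            rw [hfold, hT', g2 (by linarith) (by linarith), hlen]
            simp [stF, Nat.add_mod, hr]
          · right; right
            refine ⟨?_, hnB', ?_⟩
            · intro hFw
              have := (FwdA_append.mp hFw).2
              rw [fc1 hr] at this
              exact absurd this (by decide)
            · rw [hlastw, hfold, hT']
              exact e2 ha hb hc
        · have hT' : u.foldl stepT ((a,b,c) : T3) = ((a,-b,-c) : T3) := by rw [hT]; simp [stF, hr]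
          have hlv : u.getLastD 0 = 1 := by rw [hlast]; exact fc1 (by omega)
          rcases fin3cases j with rfl | rfl | rfl
          · right; right
            refine ⟨?_, hnB', ?_⟩
            · intro hFw
              have := (FwdA_append.mp hFw).2
              rw [fc2 hr] at this
              exact absurd this (by decide)
            · rw [hlastw, hfold, hT']
              exact e3 ha hb hc
          · exact absurd hlv hnej
          · left
            refine ⟨FwdA_append.mpr ⟨hF, (fc2 hr).symm⟩, ?_⟩
            rw [hfold, hT', g3 (by linarith) (by linarith), hlen]
            simp [stF, Nat.add_mod, hr]
      · -- BwdA u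
        have hlast : u.getLastD 0 = -(((u.length - 1 : ℕ) : Fin 3) + 1) := by
          rw [getLastD_eq hne]; exact hB (u.length - 1) (by omega)
        have h00 : u.getD 0 0 = 2 := by
          have h := hB 0 hlp
          rw [Nat.cast_zero] at h
          rw [h]; decide
        have hnF' : ¬ FwdA (u ++ [j]) := by
          intro hFw
          have := hFw 0 (by simp)
          rw [List.getD_append _ _ _ _ hlp, h00] at this
          exact absurd this (by decide)
        rcases (show u.length % 3 = 0 ∨ u.length % 3 = 1 ∨ u.length % 3 = 2 by omega) with hr | hr | hr
        · have hT' : u.foldl stepT ((a,b,c) : T3) = ((a,b,c) : T3) := by rw [hT]; simp [stB, hr]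
          have hlv : u.getLastD 0 = 0 := by rw [hlast, fc2 (by omega)]; decide
          rcases fin3cases j with rfl | rfl | rfl
          · exact absurd hlv hnej
          · right; right
            refine ⟨hnF', ?_, ?_⟩
            · intro hBw
              have := (BwdA_append.mp hBw).2
              rw [fc0 hr] at this
              exact absurd this (by decide)
            · rw [hlastw, hfold, hT']
              exact e1 ha hb hc
          · right; left
            refine ⟨BwdA_append.mpr ⟨hB, by rw [fc0 hr]; decide⟩, ?_⟩
            rw [hfold, hT', g4 (by linarith) (by linarith), hlen]
            simp [stB, Nat.add_mod, hr]
        · have hT' : u.foldl stepT ((a,b,c) : T3) = ((a,-b,-c) : T3) := by rw [hT]; simp [stB, hr]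
          have hlv : u.getLastD 0 = 2 := by rw [hlast, fc0 (by omega)]; decide
          rcases fin3cases j with rfl | rfl | rfl
          · right; right
            refine ⟨hnF', ?_, ?_⟩
            · intro hBw
              have := (BwdA_append.mp hBw).2
              rw [fc1 hr] at this
              exact absurd this (by decide)
            · rw [hlastw, hfold, hT']
              exact e3 ha hb hc
          · right; left
            refine ⟨BwdA_append.mpr ⟨hB, by rw [fc1 hr]; decide⟩, ?_⟩
            rw [hfold, hT', g5 (by linarith) (by linarith), hlen]
            simp [stB, Nat.add_mod, hr]
          · exact absurd hlv hnej
        · have hT' : u.foldl stepT ((a,b,c) : T3) = ((-a,-b,c) : T3) := by rw [hT]; simp [stB, hr]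
          have hlv : u.getLastD 0 = 1 := by rw [hlast, fc1 (by omega)]; decide
          rcases fin3cases j with rfl | rfl | rfl
          · right; left
            refine ⟨BwdA_append.mpr ⟨hB, by rw [fc2 hr]; decide⟩, ?_⟩
            rw [hfold, hT', g6 (by linarith) (by linarith), hlen]
            simp [stB, Nat.add_mod, hr]
          · exact absurd hlv hnej
          · right; right
            refine ⟨hnF', ?_, ?_⟩
            · intro hBw
              have := (BwdA_append.mp hBw).2
              rw [fc2 hr] at this
              exact absurd this (by decide)
            · rw [hlastw, hfold, hT']
              exact e2 ha hb hc
      · -- Phi case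
        right; right
        refine ⟨fun hFw => hnF (FwdA_append.mp hFw).1,
          fun hBw => hnB (BwdA_append.mp hBw).1, ?_⟩
        rw [hlastw, hfold]
        exact phi_step (Ne.symm hnej) hphi


lemma mutMat_MtT (k : Fin 3) (t : T3) : mutMat k (MtT t) = MtT (stepT t k) := by
  obtain ⟨x, y, z⟩ := t
  fin_cases k
  · exact mm0 x y z
  · exact mm1 x y z
  · exact mm2 x y z

lemma BW_eq (c12 c13 c23 : ℤ) (w : List (Fin 3)) :
    BW c12 c13 c23 w = MtT (w.foldl stepT ((c12, c13, c23) : T3)) := by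
  have key : ∀ (v : List (Fin 3)) (t : T3),
      v.foldl (fun m k => mutMat k m) (MtT t) = MtT (v.foldl stepT t) := by
    intro v
    induction v with
    | nil => intro t; rfl
    | cons k r ihv =>
      intro t
      simp only [List.foldl_cons]
      rw [mutMat_MtT]
      exact ihv _
  rw [show BW c12 c13 c23 w = w.foldl (fun m k => mutMat k m) (MtT (c12, c13, c23)) from rfl]
  exact key w _


theorem stmt17 (c12 c13 c23 : ℤ) (h12 : 2 ≤ c12) (h13 : 2 ≤ c13) (h23 : 2 ≤ c23)
    (w : List (Fin 3)) (hw : w.Chain' (· ≠ ·)) :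
    (¬ (0 < BW c12 c13 c23 w 0 1 ∧ 0 < BW c12 c13 c23 w 1 2 ∧ 0 < -BW c12 c13 c23 w 0 2) ∧
      ¬ (BW c12 c13 c23 w 0 1 < 0 ∧ BW c12 c13 c23 w 1 2 < 0 ∧ -BW c12 c13 c23 w 0 2 < 0)) ↔
    Acyclic w := by
  set T := w.foldl stepT ((c12, c13, c23) : T3) with hT
  have e01 : BW c12 c13 c23 w 0 1 = T.1 := by rw [BW_eq]; rfl
  have e02 : BW c12 c13 c23 w 0 2 = T.2.1 := by rw [BW_eq]; rfl
  have e12 : BW c12 c13 c23 w 1 2 = T.2.2 := by rw [BW_eq]; rfl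
  rw [e01, e02, e12]
  have hAcy : Acyclic w ↔ (FwdA w ∨ BwdA w) := Iff.rfl
  rcases invariant h12 h13 h23 w hw with ⟨hF, hTv⟩ | ⟨hB, hTv⟩ | ⟨hnF, hnB, hphi⟩
  · rw [hAcy]
    refine iff_of_true ?_ (Or.inl hF)
    rw [← hT] at hTv
    rcases (show w.length % 3 = 0 ∨ w.length % 3 = 1 ∨ w.length % 3 = 2 by omega) with hr | hr | hr <;>
    [ rw [hTv, show stF c12 c13 c23 w.length = ((c12,c13,c23) : T3) by simp [stF, hr]];
      rw [hTv, show stF c12 c13 c23 w.length = ((-c12,-c13,c23) : T3) by simp [stF, hr]];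
      rw [hTv, show stF c12 c13 c23 w.length = ((c12,-c13,-c23) : T3) by simp [stF, hr]]] <;>
    (constructor <;> rintro ⟨p1, p2, p3⟩ <;> simp only at p1 p2 p3 <;> linarith)
  · rw [hAcy]
    refine iff_of_true ?_ (Or.inr hB)
    rw [← hT] at hTv
    rcases (show w.length % 3 = 0 ∨ w.length % 3 = 1 ∨ w.length % 3 = 2 by omega) with hr | hr | hr <;>
    [ rw [hTv, show stB c12 c13 c23 w.length = ((c12,c13,c23) : T3) by simp [stB, hr]];
      rw [hTv, show stB c12 c13 c23 w.length = ((c12,-c13,-c23) : T3) by simp [stB, hr]];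
      rw [hTv, show stB c12 c13 c23 w.length = ((-c12,-c13,c23) : T3) by simp [stB, hr]]] <;>
    (constructor <;> rintro ⟨p1, p2, p3⟩ <;> simp only at p1 p2 p3 <;> linarith)
  · rw [hAcy]
    refine iff_of_false ?_ (fun h => h.elim hnF hnB)
    rw [← hT] at hphi
    rcases hphi.1 with ⟨hx, hy, hz⟩ | ⟨hx, hy, hz⟩
    · rintro ⟨hL, -⟩
      exact hL ⟨hx, hz, by linarith⟩
    · rintro ⟨-, hR⟩
      exact hR ⟨hx, hz, by linarith⟩


end
end
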